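/- arXiv:1103.3928 — 2 statements merged into one kernel-verified Lean document; each statement's English description precedes it below -/
import Mathlib

section
/- Fix n ≥ 1. For a prime p, let h_p : GL_n(𝔽_p) → [0,1]^{n²} send A = (a_ij) to the vector (a₁₁/p, …, a_nn/p), where the entries a_ij are represented by integers in {0,…,p−1}. Let R ⊆ [0,1]^{n²} be a measurable set such that for every ε > 0 there exist two finite collections of non-overlapping rectangles R_1,…,R_k and R^1,…,R^l with ∪_{i=1}^k R_i ⊆ R ⊆ ∪_{j=1}^l R^j, area(R \ ∪R_i) < ε and area(∪R^j \ R) < ε. Then lim_{p→∞, p prime} (#(Image(h_p) ∩ R))/#GL_n(𝔽_p) = area(R). -/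
open MeasureTheory Filter Topology

/-- A rectangle in `ι → ℝ`: a product of intervals. -/
def IsRect {ι : Type} (S : Set (ι → ℝ)) : Prop :=
  ∃ I : ι → Set ℝ, (∀ i, (I i).OrdConnected) ∧ S = Set.univ.pi I

/-- The map `h_p` sending `A ∈ GL_n(𝔽_p)` to the point of `[0,1]^{n²}` whose coordinates are
the entries of `A`, represented by integers in `{0,…,p-1}`, divided by `p`. -/
noncomputable def hmap (n p : ℕ) (A : Matrix.GeneralLinearGroup (Fin n) (ZMod p)) :
    Fin n × Fin n → ℝ :=
  fun ij => (((A : Matrix (Fin n) (Fin n) (ZMod p)) ij.1 ij.2).val : ℝ) / p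

section Helpers
open Set

lemma nat_sub_cast_ge (m k : ℕ) : (m:ℝ) - k ≤ ((m - k : ℕ):ℝ) := by
  rcases le_total k m with h|h
  · rw [Nat.cast_sub h]
  · have h0 : m - k = 0 := Nat.sub_eq_zero_of_le h
    rw [h0]
    have : (m:ℝ) ≤ (k:ℝ) := by exact_mod_cast h
    push_cast
    linarith

lemma vol_sandwich {a b : ℝ} {s : Set ℝ} (h1 : Ioo a b ⊆ s) (h2 : s ⊆ Icc a b) :
    volume s = ENNReal.ofReal (b - a) := by
  refine le_antisymm ?_ ?_
  · calc volume s ≤ volume (Icc a b) := measure_mono h2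
      _ = ENNReal.ofReal (b - a) := Real.volume_Icc
  · calc ENNReal.ofReal (b - a) = volume (Ioo a b) := Real.volume_Ioo.symm
      _ ≤ volume s := measure_mono h1

lemma count_coord_core (p : ℕ) (hp : 0 < p) {K : Set ℝ} {a b : ℝ}
    (ha : 0 ≤ a) (hab : a ≤ b) (hb : b ≤ 1)
    (h1 : Ioo a b ⊆ K) (h2 : K ⊆ Icc a b) :
    |({k : Fin p | ((k:ℕ):ℝ)/p ∈ K}.ncard : ℝ) - p*(b-a)| ≤ 1 := by
  have hpR : (0:ℝ) < p := by exact_mod_cast hp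
  set S : Set (Fin p) := {k : Fin p | ((k:ℕ):ℝ)/p ∈ K} with hS
  have hSfin : S.Finite := Set.toFinite _
  have hpa : (0:ℝ) ≤ p*a := by positivity
  have hpb : (0:ℝ) ≤ p*b := by nlinarith
  -- upper bound
  have hup : (S.ncard : ℝ) ≤ p*b - p*a + 1 := by
    have himg : (fun k : Fin p => (k:ℕ)) '' S ⊆ Set.Icc ⌈p*a⌉₊ ⌊p*b⌋₊ := by
      rintro _ ⟨k, hk, rfl⟩
      have hmem := h2 hk
      have h1' : p*a ≤ (k:ℕ) := by
        have := hmem.1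
        rw [le_div_iff₀ hpR] at this; linarith
      have h2' : ((k:ℕ):ℝ) ≤ p*b := by
        have := hmem.2
        rw [div_le_iff₀ hpR] at this; linarith
      exact ⟨Nat.ceil_le.mpr h1', Nat.le_floor h2'⟩
    have hn1 : S.ncard = ((fun k : Fin p => (k:ℕ)) '' S).ncard :=
      (Set.ncard_image_of_injective _ Fin.val_injective).symm
    have hn2 : ((fun k : Fin p => (k:ℕ)) '' S).ncard ≤ (Set.Icc ⌈p*a⌉₊ ⌊p*b⌋₊).ncard := by
      apply Set.ncard_le_ncard himg (Set.finite_Icc _ _)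
    have hn3 : (Set.Icc ⌈p*a⌉₊ ⌊p*b⌋₊).ncard = ⌊p*b⌋₊ + 1 - ⌈p*a⌉₊ := by
      rw [← Finset.coe_Icc, Set.ncard_coe_finset, Nat.card_Icc]
    have : (S.ncard : ℝ) ≤ ((⌊p*b⌋₊ + 1 - ⌈p*a⌉₊ : ℕ) : ℝ) := by
      exact_mod_cast hn1 ▸ (hn3 ▸ hn2)
    refine this.trans ?_
    rcases le_or_gt ⌈p*a⌉₊ (⌊p*b⌋₊ + 1) with h|h
    · rw [Nat.cast_sub h]
      have hf : (⌊p*b⌋₊ : ℝ) ≤ p*b := Nat.floor_le hpb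
      have hc : p*a ≤ (⌈p*a⌉₊ : ℝ) := Nat.le_ceil _
      push_cast
      linarith
    · have h0 : ⌊p*b⌋₊ + 1 - ⌈p*a⌉₊ = 0 := Nat.sub_eq_zero_of_le h.le
      rw [h0]
      push_cast
      nlinarith
  -- lower bound
  have hlow : p*b - p*a - 1 ≤ (S.ncard : ℝ) := by
    set T : Finset ℕ := Finset.Ico (⌊p*a⌋₊+1) ⌈p*b⌉₊ with hT
    have hTS : ∀ k ∈ T, ∃ hk : k < p, (⟨k, hk⟩ : Fin p) ∈ S := by
      intro k hk
      rw [hT, Finset.mem_Ico] at hk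
      have hka : p*a < (k:ℝ) := by
        calc p*a < (⌊p*a⌋₊:ℝ) + 1 := Nat.lt_floor_add_one _
          _ ≤ (k:ℝ) := by exact_mod_cast hk.1
      have hkb : (k:ℝ) < p*b := Nat.lt_ceil.mp hk.2
      have hkp : k < p := by
        have : (k:ℝ) < p := by nlinarith
        exact_mod_cast this
      refine ⟨hkp, ?_⟩
      have : ((k:ℕ):ℝ)/p ∈ Ioo a b := by
        constructor
        · rw [lt_div_iff₀ hpR]; linarith
        · rw [div_lt_iff₀ hpR]; linarith
      exact h1 this
    -- image of T in S
    have hinj : Set.InjOn (fun k : ℕ => if hk : k < p then (⟨k, hk⟩ : Fin p) else ⟨0, hp⟩) ↑T := by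
      intro x hx y hy hxy
      rcases hTS x hx with ⟨hxp, _⟩
      rcases hTS y hy with ⟨hyp, _⟩
      simp only [dif_pos hxp, dif_pos hyp] at hxy
      exact Fin.mk.inj_iff.mp hxy
    have himg : (fun k : ℕ => if hk : k < p then (⟨k, hk⟩ : Fin p) else ⟨0, hp⟩) '' ↑T ⊆ S := by
      rintro _ ⟨k, hk, rfl⟩
      rcases hTS k hk with ⟨hkp, hmem⟩
      simpa [dif_pos hkp] using hmem
    have hcard : T.card ≤ S.ncard := by
      calc T.card = (↑T : Set ℕ).ncard := (Set.ncard_coe_finset T).symm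
        _ = ((fun k : ℕ => if hk : k < p then (⟨k, hk⟩ : Fin p) else ⟨0, hp⟩) '' ↑T).ncard :=
            (Set.ncard_image_of_injOn hinj).symm
        _ ≤ S.ncard := Set.ncard_le_ncard himg hSfin
    have hTcard : T.card = ⌈p*b⌉₊ - (⌊p*a⌋₊+1) := Nat.card_Ico _ _
    have h5 : p*b - p*a - 1 ≤ (T.card : ℝ) := by
      rw [hTcard]
      refine le_trans ?_ (nat_sub_cast_ge _ _)
      have hf : (⌊p*a⌋₊ : ℝ) ≤ p*a := Nat.floor_le hpa
      have hc : p*b ≤ (⌈p*b⌉₊ : ℝ) := Nat.le_ceil _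
      push_cast
      linarith
    calc p*b - p*a - 1 ≤ (T.card:ℝ) := h5
      _ ≤ (S.ncard : ℝ) := by exact_mod_cast hcard
  rw [abs_le]
  constructor <;> nlinarith

lemma mem_Ico_of_fin (p : ℕ) (k : Fin p) : ((k:ℕ):ℝ)/p ∈ Ico (0:ℝ) 1 := by
  have hp : (0:ℝ) < p := by exact_mod_cast k.pos
  constructor
  · positivity
  · rw [div_lt_one hp]
    exact_mod_cast k.2

/-- Sandwich data for an ordConnected set intersected with `Ico 0 1`. -/
lemma ordconn_sandwich {I : Set ℝ} (hI : I.OrdConnected)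
    (hne : (I ∩ Ico 0 1).Nonempty) :
    ∃ a b : ℝ, 0 ≤ a ∧ a ≤ b ∧ b ≤ 1 ∧ Ioo a b ⊆ I ∩ Ico 0 1 ∧ I ∩ Ico 0 1 ⊆ Icc a b := by
  set J := I ∩ Ico 0 1 with hJdef
  have hJ : J.OrdConnected := hI.inter Set.ordConnected_Ico
  have hbdd_below : BddBelow J := ⟨0, fun x hx => hx.2.1⟩
  have hbdd_above : BddAbove J := ⟨1, fun x hx => hx.2.2.le⟩
  refine ⟨sInf J, sSup J, ?_, ?_, ?_, ?_, ?_⟩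
  · exact le_csInf hne fun x hx => hx.2.1
  · exact csInf_le_csSup hne hbdd_below hbdd_above
  · exact csSup_le hne fun x hx => hx.2.2.le
  · exact (IsConnected.Ioo_csInf_csSup_subset ⟨hne, hJ.isPreconnected⟩ hbdd_below hbdd_above)
  · exact subset_Icc_csInf_csSup hbdd_below hbdd_above

lemma count_vol_coord (p : ℕ) (hp : 0 < p) {I : Set ℝ} (hI : I.OrdConnected) :
    |({k : Fin p | ((k:ℕ):ℝ)/p ∈ I}.ncard : ℝ) - p * (volume (I ∩ Ico 0 1)).toReal| ≤ 1 := by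
  have hset : {k : Fin p | ((k:ℕ):ℝ)/p ∈ I} = {k : Fin p | ((k:ℕ):ℝ)/p ∈ I ∩ Ico 0 1} := by
    ext k
    simp only [Set.mem_setOf_eq, Set.mem_inter_iff]
    exact ⟨fun h => ⟨h, mem_Ico_of_fin p k⟩, fun h => h.1⟩
  rcases Set.eq_empty_or_nonempty (I ∩ Ico 0 1) with hemp | hne
  · rw [hset, hemp]
    simp
  · obtain ⟨a, b, ha, hab, hb, h1, h2⟩ := ordconn_sandwich hI hne
    have hvol : volume (I ∩ Ico 0 1) = ENNReal.ofReal (b - a) := vol_sandwich h1 h2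
    rw [hset, hvol, ENNReal.toReal_ofReal (by linarith)]
    exact count_coord_core p hp ha hab hb h1 h2

lemma vol_interior_inter (I : Set ℝ) (hI : I.OrdConnected) :
    volume (interior I ∩ Ico 0 1) = volume (I ∩ Ico 0 1) := by
  rcases Set.eq_empty_or_nonempty (I ∩ Ico 0 1) with hemp | hne
  · have : interior I ∩ Ico 0 1 ⊆ I ∩ Ico 0 1 :=
      Set.inter_subset_inter_left _ interior_subset
    rw [hemp] at this
    rw [Set.subset_empty_iff.mp this, hemp]
  · obtain ⟨a, b, ha, hab, hb, h1, h2⟩ := ordconn_sandwich hI hne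
    have h1' : Ioo a b ⊆ interior I ∩ Ico 0 1 := by
      intro x hx
      refine ⟨?_, (h1 hx).2⟩
      exact interior_maximal (fun y hy => (h1 hy).1) isOpen_Ioo hx
    have h2' : interior I ∩ Ico 0 1 ⊆ Icc a b :=
      (Set.inter_subset_inter_left _ interior_subset).trans h2
    rw [vol_sandwich h1' h2', vol_sandwich h1 h2]

lemma vol_inter_Ico (I : Set ℝ) (hsub : I ⊆ Icc 0 1) :
    volume (I ∩ Ico 0 1) = volume I := by
  refine le_antisymm (measure_mono (Set.inter_subset_left)) ?_
  have : I ⊆ (I ∩ Ico 0 1) ∪ {1} := by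
    intro x hx
    rcases lt_or_eq_of_le (hsub hx).2 with h | h
    · exact Or.inl ⟨hx, (hsub hx).1, h⟩
    · exact Or.inr (by simp [h])
  calc volume I ≤ volume ((I ∩ Ico 0 1) ∪ {1}) := measure_mono this
    _ ≤ volume (I ∩ Ico 0 1) + volume ({1} : Set ℝ) := measure_union_le _ _
    _ = volume (I ∩ Ico 0 1) := by simp

lemma vol_interior_eq (I : Set ℝ) (hI : I.OrdConnected) (hsub : I ⊆ Icc 0 1) :
    volume (interior I) = volume I := by
  rcases Set.eq_empty_or_nonempty I with rfl | hne
  · simp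
  · have hbdd_below : BddBelow I := ⟨0, fun x hx => (hsub hx).1⟩
    have hbdd_above : BddAbove I := ⟨1, fun x hx => (hsub hx).2⟩
    have h1 : Ioo (sInf I) (sSup I) ⊆ I :=
      IsConnected.Ioo_csInf_csSup_subset ⟨hne, hI.isPreconnected⟩ hbdd_below hbdd_above
    have h2 : I ⊆ Icc (sInf I) (sSup I) := subset_Icc_csInf_csSup hbdd_below hbdd_above
    have h1' : Ioo (sInf I) (sSup I) ⊆ interior I := interior_maximal h1 isOpen_Ioo
    have h2' : interior I ⊆ Icc (sInf I) (sSup I) := interior_subset.trans h2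
    rw [vol_sandwich h1' h2', vol_sandwich h1 h2]

section Grid

variable {ι : Type} [Fintype ι]

/-- The grid map sending `f : ι → Fin p` to the point with coordinates `f i / p`. -/
noncomputable def gridmap (ι : Type) (p : ℕ) : (ι → Fin p) → (ι → ℝ) :=
  fun f i => ((f i : ℕ) : ℝ) / p

lemma gridmap_injective (p : ℕ) (hp : 0 < p) : Function.Injective (gridmap ι p) := by
  intro f g hfg
  funext i
  have h := congrFun hfg i
  have hpR : (0:ℝ) < p := by exact_mod_cast hp
  have : ((f i : ℕ) : ℝ) = ((g i : ℕ) : ℝ) := by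
    simp only [gridmap] at h; rw [div_left_inj' hpR.ne'] at h
    exact_mod_cast h
  have : (f i : ℕ) = (g i : ℕ) := by exact_mod_cast this
  exact Fin.val_injective this

lemma grid_inter_pi (p : ℕ) (I : ι → Set ℝ) :
    Set.range (gridmap ι p) ∩ Set.univ.pi I =
      gridmap ι p '' (Set.univ.pi fun i => {k : Fin p | ((k:ℕ):ℝ)/p ∈ I i}) := by
  ext x
  constructor
  · rintro ⟨⟨f, rfl⟩, hx⟩
    exact ⟨f, fun i _ => hx i (Set.mem_univ i), rfl⟩
  · rintro ⟨f, hf, rfl⟩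
    exact ⟨⟨f, rfl⟩, fun i _ => hf i (Set.mem_univ i)⟩

lemma ncard_univ_pi {β : ι → Type*} (S : ∀ i, Set (β i)) :
    (Set.univ.pi S).ncard = ∏ i, (S i).ncard := by
  rw [← Nat.card_coe_set_eq, Nat.card_congr (Equiv.Set.univPi S), Nat.card_pi]
  simp [Nat.card_coe_set_eq]

lemma abs_prod_sub_prod_le {α : Type*} (c d : α → ℝ) (M : ℝ) (hM : 1 ≤ M)
    (hc : ∀ i, c i ∈ Set.Icc 0 M) (hd : ∀ i, d i ∈ Set.Icc 0 M)
    (h : ∀ i, |c i - d i| ≤ 1) (s : Finset α) :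
    |∏ i ∈ s, c i - ∏ i ∈ s, d i| ≤ s.card * M ^ (s.card - 1) := by
  induction s using Finset.cons_induction_on with
  | empty => simp
  | cons _ _ ha ihs =>
    rename_i a s
    rw [Finset.prod_cons, Finset.prod_cons, Finset.card_cons]
    have hca := hc a
    have hda := hd a
    have hha := h a
    have hprodc : ∏ i ∈ s, c i ∈ Set.Icc 0 (M ^ s.card) := by
      constructor
      · exact Finset.prod_nonneg fun i hi => (hc i).1
      · calc ∏ i ∈ s, c i ≤ ∏ _i ∈ s, M :=
              Finset.prod_le_prod (fun i _ => (hc i).1) (fun i _ => (hc i).2)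
          _ = M ^ s.card := by rw [Finset.prod_const]
    have key : |c a * ∏ i ∈ s, c i - d a * ∏ i ∈ s, d i| ≤
        |c a - d a| * |∏ i ∈ s, c i| + |d a| * |∏ i ∈ s, c i - ∏ i ∈ s, d i| := by
      have : c a * ∏ i ∈ s, c i - d a * ∏ i ∈ s, d i =
          (c a - d a) * (∏ i ∈ s, c i) + d a * (∏ i ∈ s, c i - ∏ i ∈ s, d i) := by ring
      rw [this]
      refine (abs_add_le _ _).trans ?_
      rw [abs_mul, abs_mul]
    refine key.trans ?_
    have h1 : |c a - d a| * |∏ i ∈ s, c i| ≤ 1 * M ^ s.card := by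
      apply mul_le_mul hha _ (abs_nonneg _) zero_le_one
      rw [abs_of_nonneg hprodc.1]
      exact hprodc.2
    have h2 : |d a| * |∏ i ∈ s, c i - ∏ i ∈ s, d i| ≤ M * (s.card * M ^ (s.card - 1)) := by
      apply mul_le_mul _ ihs (abs_nonneg _) (by linarith)
      rw [abs_of_nonneg hda.1]
      exact hda.2
    have h3 : M * ((s.card : ℝ) * M ^ (s.card - 1)) ≤ s.card * M ^ s.card := by
      rcases Nat.eq_zero_or_pos s.card with h0 | h0
      · rw [h0]; simp
      · have hpow : M * M ^ (s.card - 1) = M ^ s.card := by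
          rw [← pow_succ']
          congr 1
          omega
        exact le_of_eq (by rw [← hpow]; ring)
    have hMpow : (0:ℝ) ≤ M ^ s.card := by positivity
    have hexp : s.card + 1 - 1 = s.card := by omega
    rw [hexp]
    push_cast
    calc |c a - d a| * |∏ i ∈ s, c i| + |d a| * |∏ i ∈ s, c i - ∏ i ∈ s, d i|
        ≤ 1 * M ^ s.card + M * ((s.card:ℝ) * M ^ (s.card - 1)) := by
          exact add_le_add h1 h2
      _ ≤ 1 * M ^ s.card + (s.card:ℝ) * M ^ s.card := by linarith
      _ = ((s.card:ℝ) + 1) * M ^ s.card := by ring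

lemma rect_count (p : ℕ) (hp : 0 < p) (I : ι → Set ℝ) (hI : ∀ i, (I i).OrdConnected) :
    |((Set.range (gridmap ι p) ∩ Set.univ.pi I).ncard : ℝ)
      - (p:ℝ)^(Fintype.card ι) * ∏ i, (volume (I i ∩ Ico 0 1)).toReal|
      ≤ (Fintype.card ι) * (p:ℝ) ^ (Fintype.card ι - 1) := by
  have hpR : (1:ℝ) ≤ p := by exact_mod_cast hp
  rw [grid_inter_pi, Set.ncard_image_of_injective _ (gridmap_injective p hp), ncard_univ_pi,
    Nat.cast_prod]
  have hprodd : ∏ i, ((p:ℝ) * (volume (I i ∩ Ico 0 1)).toReal)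
      = (p:ℝ)^(Fintype.card ι) * ∏ i, (volume (I i ∩ Ico 0 1)).toReal := by
    rw [Finset.prod_mul_distrib, Finset.prod_const, Finset.card_univ]
  rw [← hprodd]
  have hc : ∀ i : ι, (({k : Fin p | ((k:ℕ):ℝ)/p ∈ I i}.ncard : ℝ)) ∈ Set.Icc 0 (p:ℝ) := by
    intro i
    constructor
    · positivity
    · have h1 : {k : Fin p | ((k:ℕ):ℝ)/p ∈ I i}.ncard ≤ (Set.univ : Set (Fin p)).ncard :=
        Set.ncard_le_ncard (Set.subset_univ _) Set.finite_univ
      have h2 : (Set.univ : Set (Fin p)).ncard = p := by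
        rw [Set.ncard_univ, Nat.card_eq_fintype_card, Fintype.card_fin]
      rw [h2] at h1
      exact_mod_cast h1
  have hd : ∀ i : ι, ((p:ℝ) * (volume (I i ∩ Ico 0 1)).toReal) ∈ Set.Icc 0 (p:ℝ) := by
    intro i
    have hv1 : volume (I i ∩ Ico 0 1) ≤ 1 := by
      calc volume (I i ∩ Ico 0 1) ≤ volume (Ico (0:ℝ) 1) := measure_mono Set.inter_subset_right
        _ = 1 := by rw [Real.volume_Ico]; norm_num
    have hv2 : (volume (I i ∩ Ico 0 1)).toReal ≤ 1 := by
      have := ENNReal.toReal_mono (by norm_num) hv1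
      simpa using this
    have hv0 : (0:ℝ) ≤ (volume (I i ∩ Ico 0 1)).toReal := ENNReal.toReal_nonneg
    constructor
    · positivity
    · calc (p:ℝ) * (volume (I i ∩ Ico 0 1)).toReal ≤ (p:ℝ) * 1 :=
            mul_le_mul_of_nonneg_left hv2 (by positivity)
        _ = (p:ℝ) := by ring
  have hcd : ∀ i : ι, |(({k : Fin p | ((k:ℕ):ℝ)/p ∈ I i}.ncard : ℝ))
      - ((p:ℝ) * (volume (I i ∩ Ico 0 1)).toReal)| ≤ 1 :=
    fun i => count_vol_coord p hp (hI i)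
  have := abs_prod_sub_prod_le _ _ (p:ℝ) hpR hc hd hcd Finset.univ
  simpa using this

lemma vol_pi_toReal (I : ι → Set ℝ) :
    (volume (Set.univ.pi I)).toReal = ∏ i, (volume (I i)).toReal := by
  rw [volume_pi_pi, ENNReal.toReal_prod]

lemma ncard_biUnion_le {α β : Type*} (s : Finset β) (f : β → Set α)
    (hfin : ∀ b, (f b).Finite) :
    (⋃ b ∈ s, f b).ncard ≤ ∑ b ∈ s, (f b).ncard := by
  classical
  induction s using Finset.cons_induction_on with
  | empty => simp
  | cons _ _ ha ihs =>
    rename_i a s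
    rw [Finset.sum_cons, Finset.cons_eq_insert, Finset.set_biUnion_insert]
    calc (f a ∪ ⋃ b ∈ s, f b).ncard ≤ (f a).ncard + (⋃ b ∈ s, f b).ncard :=
          Set.ncard_union_le _ _
      _ ≤ (f a).ncard + ∑ b ∈ s, (f b).ncard := by omega

lemma ncard_biUnion_eq {α β : Type*} (s : Finset β) (f : β → Set α)
    (hfin : ∀ b, (f b).Finite)
    (hdisj : ∀ i j, i ≠ j → Disjoint (f i) (f j)) :
    (⋃ b ∈ s, f b).ncard = ∑ b ∈ s, (f b).ncard := by
  classical
  induction s using Finset.cons_induction_on with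
  | empty => simp
  | cons _ _ ha ihs =>
    rename_i a s
    rw [Finset.sum_cons, Finset.cons_eq_insert, Finset.set_biUnion_insert, ← ihs]
    apply Set.ncard_union_eq
    · exact Set.disjoint_iUnion_right.mpr fun b => Set.disjoint_iUnion_right.mpr
        fun hb => hdisj a b (by rintro rfl; exact ha hb)
    · exact hfin a
    · exact s.finite_toSet.biUnion fun b _ => hfin b

lemma vol_union_eq_sum {k : ℕ} (S : Fin k → Set (ι → ℝ))
    (hmeas : ∀ i, MeasurableSet (S i))
    (hio : ∀ i, volume (interior (S i)) = volume (S i))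
    (hdisj : ∀ i j, i ≠ j → Disjoint (interior (S i)) (interior (S j))) :
    volume (⋃ i, S i) = ∑ i, volume (S i) := by
  refine le_antisymm (measure_iUnion_fintype_le _ _) ?_
  have h1 : volume (⋃ i, interior (S i)) = ∑' i, volume (interior (S i)) := by
    apply measure_iUnion
    · intro i j hij
      exact hdisj i j hij
    · intro i
      exact (isOpen_interior).measurableSet
  calc ∑ i, volume (S i) = ∑ i, volume (interior (S i)) := by
        simp_rw [hio]
    _ = ∑' i, volume (interior (S i)) := (tsum_fintype _).symm
    _ = volume (⋃ i, interior (S i)) := h1.symm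
    _ ≤ volume (⋃ i, S i) := measure_mono (Set.iUnion_mono fun i => interior_subset)

end Grid

section GLside

variable (n p : ℕ) [Fact p.Prime]

lemma hmap_injective : Function.Injective (hmap n p) := by
  haveI : NeZero p := ⟨(Fact.out : p.Prime).ne_zero⟩
  intro A B hAB
  have hpR : (0:ℝ) < p := by exact_mod_cast (Fact.out : p.Prime).pos
  apply Units.ext
  apply Matrix.ext
  intro i j
  have h := congrFun hAB (i, j)
  simp only [hmap] at h
  have hval : ((A : Matrix (Fin n) (Fin n) (ZMod p)) i j).val
      = ((B : Matrix (Fin n) (Fin n) (ZMod p)) i j).val := by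
    have hp0 : (p:ℝ) ≠ 0 := ne_of_gt hpR
    rw [div_eq_div_iff hp0 hp0] at h
    have := mul_right_cancel₀ hp0 h
    exact_mod_cast this
  exact ZMod.val_injective p hval

lemma hmap_range_subset :
    Set.range (hmap n p) ⊆ Set.range (gridmap (Fin n × Fin n) p) := by
  haveI : NeZero p := ⟨(Fact.out : p.Prime).ne_zero⟩
  rintro _ ⟨A, rfl⟩
  refine ⟨fun ij => ⟨((A : Matrix (Fin n) (Fin n) (ZMod p)) ij.1 ij.2).val, ZMod.val_lt _⟩, ?_⟩
  funext ij
  rfl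

lemma grid_ncard : (Set.range (gridmap (Fin n × Fin n) p)).ncard = p ^ (n*n) := by
  haveI : NeZero p := ⟨(Fact.out : p.Prime).ne_zero⟩
  rw [← Nat.card_coe_set_eq,
    Nat.card_range_of_injective (gridmap_injective p (Fact.out : p.Prime).pos)]
  rw [Nat.card_pi]
  simp [Nat.card_eq_fintype_card]

lemma hmap_range_ncard :
    (Set.range (hmap n p)).ncard = Nat.card (Matrix.GeneralLinearGroup (Fin n) (ZMod p)) := by
  rw [← Nat.card_coe_set_eq, Nat.card_range_of_injective (hmap_injective n p)]

lemma GL_card_formula :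
    Nat.card (Matrix.GeneralLinearGroup (Fin n) (ZMod p))
      = ∏ i : Fin n, (p^n - p^(i:ℕ)) := by
  have := Matrix.card_GL_field (𝔽 := ZMod p) (n := n)
  rwa [ZMod.card p] at this

lemma GL_card_le : (Nat.card (Matrix.GeneralLinearGroup (Fin n) (ZMod p)) : ℝ) ≤ (p:ℝ)^(n*n) := by
  rw [GL_card_formula]
  have hp1 : 1 ≤ p := (Fact.out : p.Prime).pos
  push_cast
  have hsub : ∀ i : Fin n, ((p^n - p^(i:ℕ) : ℕ) : ℝ) = (p:ℝ)^n - (p:ℝ)^(i:ℕ) := by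
    intro i
    have : p^(i:ℕ) ≤ p^n := Nat.pow_le_pow_right hp1 (le_of_lt i.2)
    push_cast [Nat.cast_sub this]
    ring
  calc (∏ i : Fin n, ((p^n - p^(i:ℕ) : ℕ) : ℝ))
      ≤ ∏ i : Fin n, (p:ℝ)^n := by
        apply Finset.prod_le_prod
        · intro i _; positivity
        · intro i _
          rw [hsub i]
          have : (0:ℝ) ≤ (p:ℝ)^(i:ℕ) := by positivity
          linarith
    _ = ((p:ℝ)^n)^n := by rw [Finset.prod_const]; simp
    _ = (p:ℝ)^(n*n) := by rw [← pow_mul]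

lemma GL_card_ge :
    ((1:ℝ) - n / p) * (p:ℝ)^(n*n)
      ≤ (Nat.card (Matrix.GeneralLinearGroup (Fin n) (ZMod p)) : ℝ) := by
  have hp2 : 2 ≤ p := (Fact.out : p.Prime).two_le
  have hp1 : 1 ≤ p := by omega
  have hpR : (1:ℝ) ≤ (p:ℝ) := by exact_mod_cast hp1
  have hpR0 : (0:ℝ) < (p:ℝ) := by linarith
  rw [GL_card_formula]
  push_cast
  have hfac : ∀ i : Fin n, (p:ℝ)^n * (1 - 1/p) ≤ ((p^n - p^(i:ℕ) : ℕ) : ℝ) := by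
    intro i
    have hle : p^(i:ℕ) ≤ p^n := Nat.pow_le_pow_right hp1 (le_of_lt i.2)
    rw [Nat.cast_sub hle]
    push_cast
    have h1 : (p:ℝ)^(i:ℕ) ≤ (p:ℝ)^(n-1) := by
      apply pow_le_pow_right₀ hpR
      omega
    have h2 : (p:ℝ)^(n-1) * (p:ℝ) = (p:ℝ)^n := by
      rw [← pow_succ]
      congr 1
      have := i.2
      omega
    have h3 : (p:ℝ)^n * (1 - 1/p) = (p:ℝ)^n - (p:ℝ)^n / p := by ring
    rw [h3]
    have h4 : (p:ℝ)^n / p = (p:ℝ)^(n-1) := by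
      rw [← h2]; field_simp
    rw [h4]
    linarith
  have hnonneg : (0:ℝ) ≤ (p:ℝ)^n * (1 - 1/p) := by
    have : 1/(p:ℝ) ≤ 1 := by
      rw [div_le_one hpR0]; linarith
    have h0 : (0:ℝ) ≤ (p:ℝ)^n := by positivity
    nlinarith
  calc ((1:ℝ) - n / p) * (p:ℝ)^(n*n)
      ≤ (1 - 1/(p:ℝ))^n * (p:ℝ)^(n*n) := by
        apply mul_le_mul_of_nonneg_right _ (by positivity)
        have hber : 1 + (n:ℝ) * (-1/p) ≤ (1 + (-1/p))^n := by
          apply one_add_mul_le_pow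
          have h1p : 1/(p:ℝ) ≤ 1 := by
            rw [div_le_one hpR0]; linarith
          have hneg : -1/(p:ℝ) = -(1/p) := by ring
          rw [hneg]
          linarith
        calc (1:ℝ) - n/p = 1 + (n:ℝ)*(-1/p) := by ring
          _ ≤ (1 + (-1/p))^n := hber
          _ = (1 - 1/(p:ℝ))^n := by ring_nf
    _ = ∏ _i : Fin n, ((p:ℝ)^n * (1 - 1/p)) := by
        rw [Finset.prod_const, Finset.card_univ, Fintype.card_fin, mul_pow, ← pow_mul]
        ring
    _ ≤ ∏ i : Fin n, ((p^n - p^(i:ℕ) : ℕ) : ℝ) := by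
        apply Finset.prod_le_prod
        · intro i _; exact hnonneg
        · intro i _; exact hfac i

end GLside

section Bridges

variable {ι : Type} [Fintype ι] [DecidableEq ι]

lemma pi_coord_subset (I : ι → Set ℝ) (C : Set ℝ) (hne : (Set.univ.pi I).Nonempty)
    (hsub : Set.univ.pi I ⊆ Set.univ.pi fun _ => C) (i : ι) : I i ⊆ C := by
  obtain ⟨x, hx⟩ := hne
  intro y hy
  have hz : Function.update x i y ∈ Set.univ.pi I := by
    intro j _
    rcases eq_or_ne j i with rfl | h
    · simpa using hy
    · simpa [Function.update_of_ne h] using hx j trivial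
  have := hsub hz i trivial
  simpa using this

lemma vol_pi_le_one (I : ι → Set ℝ)
    (hsub : Set.univ.pi I ⊆ Set.univ.pi fun _ => Icc (0:ℝ) 1) :
    volume (Set.univ.pi I) ≤ 1 := by
  calc volume (Set.univ.pi I) ≤ volume (Set.univ.pi fun _ : ι => Icc (0:ℝ) 1) :=
        measure_mono hsub
    _ = 1 := by
        rw [volume_pi_pi]
        simp

lemma vol_interior_pi (I : ι → Set ℝ) (hord : ∀ i, (I i).OrdConnected)
    (hsub : Set.univ.pi I ⊆ Set.univ.pi fun _ => Icc (0:ℝ) 1) :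
    volume (interior (Set.univ.pi I)) = volume (Set.univ.pi I) := by
  rcases Set.eq_empty_or_nonempty (Set.univ.pi I) with hemp | hne
  · have h0 : volume (Set.univ.pi I) = 0 := by rw [hemp]; exact measure_empty
    have h1 : volume (interior (Set.univ.pi I)) ≤ 0 :=
      h0 ▸ measure_mono interior_subset
    rw [h0]
    exact le_antisymm h1 (zero_le)
  · have hcoord : ∀ i, I i ⊆ Icc (0:ℝ) 1 := pi_coord_subset I _ hne hsub
    rw [interior_pi_set Set.finite_univ, volume_pi_pi, volume_pi_pi]
    congr 1
    funext i
    exact vol_interior_eq (I i) (hord i) (hcoord i)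

/-- Outer estimate: the sum of coordinate-volume products of the outer rectangles
(cut to `[0,1)`) is at most `vol R + ε`. -/
lemma sum_vol_out {l : ℕ} (I : Fin l → ι → Set ℝ)
    (hord : ∀ j i, (I j i).OrdConnected)
    (hdisj : ∀ a b : Fin l, a ≠ b →
      Disjoint (interior (Set.univ.pi (I a))) (interior (Set.univ.pi (I b))))
    (R : Set (ι → ℝ)) {ε : ℝ} (hε : 0 ≤ ε)
    (hRsub : R ⊆ ⋃ j, Set.univ.pi (I j))
    (hvolR : volume R ≠ ⊤)
    (hvol : volume ((⋃ j, Set.univ.pi (I j)) \ R) ≤ ENNReal.ofReal ε) :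
    ∑ j, ∏ i, (volume (I j i ∩ Ico 0 1)).toReal ≤ (volume R).toReal + ε := by
  set T : Fin l → Set (ι → ℝ) := fun j => Set.univ.pi fun i => I j i ∩ Ico 0 1 with hT
  have hTord : ∀ j i, (I j i ∩ Ico 0 1).OrdConnected :=
    fun j i => (hord j i).inter Set.ordConnected_Ico
  have hTsub : ∀ j, T j ⊆ Set.univ.pi fun _ : ι => Icc (0:ℝ) 1 := by
    intro j x hx i hi
    exact Set.Ico_subset_Icc_self (hx i hi).2
  have hTmeas : ∀ j, MeasurableSet (T j) :=
    fun j => MeasurableSet.univ_pi fun i => (hTord j i).measurableSet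
  have hTio : ∀ j, volume (interior (T j)) = volume (T j) :=
    fun j => vol_interior_pi _ (hTord j) (hTsub j)
  have hTR : ∀ j, T j ⊆ Set.univ.pi (I j) := by
    intro j x hx i hi
    exact (hx i hi).1
  have hTdisj : ∀ a b : Fin l, a ≠ b → Disjoint (interior (T a)) (interior (T b)) := by
    intro a b hab
    exact (hdisj a b hab).mono (interior_mono (hTR a)) (interior_mono (hTR b))
  have hsum : volume (⋃ j, T j) = ∑ j, volume (T j) :=
    vol_union_eq_sum T hTmeas hTio hTdisj
  have hUb : volume (⋃ j, T j) ≤ volume R + ENNReal.ofReal ε := by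
    calc volume (⋃ j, T j) ≤ volume (⋃ j, Set.univ.pi (I j)) :=
          measure_mono (Set.iUnion_mono hTR)
      _ ≤ volume (R ∪ ((⋃ j, Set.univ.pi (I j)) \ R)) := by
          apply measure_mono
          intro x hx
          by_cases hxR : x ∈ R
          · exact Or.inl hxR
          · exact Or.inr ⟨hx, hxR⟩
      _ ≤ volume R + volume ((⋃ j, Set.univ.pi (I j)) \ R) := measure_union_le _ _
      _ ≤ volume R + ENNReal.ofReal ε := add_le_add_right hvol _
  have hTfin : ∀ j, volume (T j) ≠ ⊤ := by
    intro j
    exact ne_top_of_le_ne_top (by norm_num) (vol_pi_le_one _ (hTsub j))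
  have hw : ∀ j, ∏ i, (volume (I j i ∩ Ico 0 1)).toReal = (volume (T j)).toReal := by
    intro j
    rw [hT]
    rw [vol_pi_toReal]
  calc ∑ j, ∏ i, (volume (I j i ∩ Ico 0 1)).toReal
      = ∑ j, (volume (T j)).toReal := by
        apply Finset.sum_congr rfl
        intro j _
        exact hw j
    _ = (∑ j, volume (T j)).toReal := (ENNReal.toReal_sum fun j _ => hTfin j).symm
    _ = (volume (⋃ j, T j)).toReal := by rw [hsum]
    _ ≤ (volume R + ENNReal.ofReal ε).toReal := by
        apply ENNReal.toReal_mono _ hUb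
        exact ENNReal.add_ne_top.mpr ⟨hvolR, ENNReal.ofReal_ne_top⟩
    _ = (volume R).toReal + ε := by
        rw [ENNReal.toReal_add hvolR ENNReal.ofReal_ne_top, ENNReal.toReal_ofReal hε]

/-- Inner estimate: the sum of coordinate-volume products of the interiors of the inner
rectangles is at least `vol R - ε`. -/
lemma sum_vol_in {k : ℕ} (I : Fin k → ι → Set ℝ)
    (hord : ∀ a i, (I a i).OrdConnected)
    (hdisj : ∀ a b : Fin k, a ≠ b →
      Disjoint (interior (Set.univ.pi (I a))) (interior (Set.univ.pi (I b))))
    (R : Set (ι → ℝ)) {ε : ℝ} (hε : 0 ≤ ε)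
    (hcube : R ⊆ Set.univ.pi fun _ => Icc (0:ℝ) 1)
    (hsub : (⋃ a, Set.univ.pi (I a)) ⊆ R)
    (hvol : volume (R \ ⋃ a, Set.univ.pi (I a)) ≤ ENNReal.ofReal ε) :
    (volume R).toReal - ε ≤ ∑ a, ∏ i, (volume (interior (I a i) ∩ Ico 0 1)).toReal := by
  have hpicube : ∀ a, Set.univ.pi (I a) ⊆ Set.univ.pi fun _ : ι => Icc (0:ℝ) 1 :=
    fun a => (Set.subset_iUnion (fun a => Set.univ.pi (I a)) a).trans (hsub.trans hcube)
  have hmeas : ∀ a, MeasurableSet (Set.univ.pi (I a)) :=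
    fun a => MeasurableSet.univ_pi fun i => (hord a i).measurableSet
  have hio : ∀ a, volume (interior (Set.univ.pi (I a))) = volume (Set.univ.pi (I a)) :=
    fun a => vol_interior_pi _ (hord a) (hpicube a)
  have hsum : volume (⋃ a, Set.univ.pi (I a)) = ∑ a, volume (Set.univ.pi (I a)) :=
    vol_union_eq_sum _ hmeas hio hdisj
  have hfin : ∀ a, volume (Set.univ.pi (I a)) ≠ ⊤ :=
    fun a => ne_top_of_le_ne_top (by norm_num) (vol_pi_le_one _ (hpicube a))
  -- identify the products with the volumes
  have hw : ∀ a, ∏ i, (volume (interior (I a i) ∩ Ico 0 1)).toReal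
      = (volume (Set.univ.pi (I a))).toReal := by
    intro a
    rcases Set.eq_empty_or_nonempty (Set.univ.pi (I a)) with hemp | hne
    · obtain ⟨i0, hi0⟩ := Set.univ_pi_eq_empty_iff.mp hemp
      have h1 : (volume (interior (I a i0) ∩ Ico 0 1)).toReal = 0 := by
        rw [hi0]
        simp
      rw [hemp]
      rw [Finset.prod_eq_zero (Finset.mem_univ i0) h1]
      simp
    · have hcoord : ∀ i, I a i ⊆ Icc (0:ℝ) 1 := pi_coord_subset _ _ hne (hpicube a)
      have hcoordvol : ∀ i, volume (interior (I a i) ∩ Ico 0 1) = volume (I a i) := by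
        intro i
        rw [vol_interior_inter (I a i) (hord a i), vol_inter_Ico (I a i) (hcoord i)]
      calc ∏ i, (volume (interior (I a i) ∩ Ico 0 1)).toReal
          = ∏ i, (volume (I a i)).toReal := by
            apply Finset.prod_congr rfl
            intro i _
            rw [hcoordvol i]
        _ = (volume (Set.univ.pi (I a))).toReal := (vol_pi_toReal _).symm
  have hRle : volume R ≤ ∑ a, volume (Set.univ.pi (I a)) + ENNReal.ofReal ε := by
    calc volume R ≤ volume ((⋃ a, Set.univ.pi (I a)) ∪ (R \ ⋃ a, Set.univ.pi (I a))) := by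
          apply measure_mono
          intro x hx
          by_cases hxU : x ∈ ⋃ a, Set.univ.pi (I a)
          · exact Or.inl hxU
          · exact Or.inr ⟨hx, hxU⟩
      _ ≤ volume (⋃ a, Set.univ.pi (I a)) + volume (R \ ⋃ a, Set.univ.pi (I a)) :=
          measure_union_le _ _
      _ ≤ ∑ a, volume (Set.univ.pi (I a)) + ENNReal.ofReal ε := by
          rw [← hsum]
          exact add_le_add_right hvol _
  have hsumfin : (∑ a, volume (Set.univ.pi (I a))) ≠ ⊤ :=
    ENNReal.sum_ne_top.mpr fun a _ => hfin a
  have hR : (volume R).toReal ≤ (∑ a, volume (Set.univ.pi (I a))).toReal + ε := by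
    calc (volume R).toReal ≤ (∑ a, volume (Set.univ.pi (I a)) + ENNReal.ofReal ε).toReal := by
          apply ENNReal.toReal_mono _ hRle
          exact ENNReal.add_ne_top.mpr ⟨hsumfin, ENNReal.ofReal_ne_top⟩
      _ = (∑ a, volume (Set.univ.pi (I a))).toReal + ε := by
          rw [ENNReal.toReal_add hsumfin ENNReal.ofReal_ne_top, ENNReal.toReal_ofReal hε]
  have hsum' : (∑ a, volume (Set.univ.pi (I a))).toReal
      = ∑ a, (volume (Set.univ.pi (I a))).toReal :=
    ENNReal.toReal_sum fun a _ => hfin a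
  calc (volume R).toReal - ε ≤ (∑ a, volume (Set.univ.pi (I a))).toReal := by linarith
    _ = ∑ a, (volume (Set.univ.pi (I a))).toReal := hsum'
    _ = ∑ a, ∏ i, (volume (interior (I a i) ∩ Ico 0 1)).toReal := by
        apply Finset.sum_congr rfl
        intro a _
        exact (hw a).symm

end Bridges

section GridBounds

variable {ι : Type} [Fintype ι]

lemma grid_count_upper (p : ℕ) (hp : 0 < p) {l : ℕ} (I : Fin l → ι → Set ℝ)
    (hord : ∀ j i, (I j i).OrdConnected) (R : Set (ι → ℝ))
    (hsub : R ⊆ ⋃ j, Set.univ.pi (I j)) :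
    ((Set.range (gridmap ι p) ∩ R).ncard : ℝ) ≤
      (p:ℝ)^(Fintype.card ι) * (∑ j, ∏ i, (volume (I j i ∩ Ico 0 1)).toReal)
        + l * ((Fintype.card ι) * (p:ℝ)^(Fintype.card ι - 1)) := by
  have hgridfin : (Set.range (gridmap ι p)).Finite := Set.finite_range _
  have hsub1 : Set.range (gridmap ι p) ∩ R ⊆
      ⋃ j ∈ Finset.univ, (Set.range (gridmap ι p) ∩ Set.univ.pi (I j)) := by
    intro x hx
    obtain ⟨j, hj⟩ := Set.mem_iUnion.mp (hsub hx.2)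
    exact Set.mem_biUnion (Finset.mem_univ j) ⟨hx.1, hj⟩
  have h1 : (Set.range (gridmap ι p) ∩ R).ncard ≤
      ∑ j, (Set.range (gridmap ι p) ∩ Set.univ.pi (I j)).ncard := by
    calc (Set.range (gridmap ι p) ∩ R).ncard ≤
        (⋃ j ∈ Finset.univ, (Set.range (gridmap ι p) ∩ Set.univ.pi (I j))).ncard := by
          exact Set.ncard_le_ncard hsub1 (Set.Finite.biUnion (Finset.finite_toSet _)
            fun j _ => hgridfin.subset Set.inter_subset_left)
      _ ≤ ∑ j, (Set.range (gridmap ι p) ∩ Set.univ.pi (I j)).ncard :=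
          ncard_biUnion_le _ _ fun j => hgridfin.subset Set.inter_subset_left
  have h2 : ∀ j, ((Set.range (gridmap ι p) ∩ Set.univ.pi (I j)).ncard : ℝ) ≤
      (p:ℝ)^(Fintype.card ι) * ∏ i, (volume (I j i ∩ Ico 0 1)).toReal
        + (Fintype.card ι) * (p:ℝ)^(Fintype.card ι - 1) := by
    intro j
    have := abs_le.mp (rect_count p hp (I j) (hord j))
    linarith [this.2]
  calc ((Set.range (gridmap ι p) ∩ R).ncard : ℝ)
      ≤ ∑ j, ((Set.range (gridmap ι p) ∩ Set.univ.pi (I j)).ncard : ℝ) := by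
        exact_mod_cast h1
    _ ≤ ∑ j, ((p:ℝ)^(Fintype.card ι) * ∏ i, (volume (I j i ∩ Ico 0 1)).toReal
        + (Fintype.card ι) * (p:ℝ)^(Fintype.card ι - 1)) :=
        Finset.sum_le_sum fun j _ => h2 j
    _ = (p:ℝ)^(Fintype.card ι) * (∑ j, ∏ i, (volume (I j i ∩ Ico 0 1)).toReal)
        + l * ((Fintype.card ι) * (p:ℝ)^(Fintype.card ι - 1)) := by
        rw [Finset.sum_add_distrib, Finset.mul_sum, Finset.sum_const, Finset.card_univ,
          Fintype.card_fin, nsmul_eq_mul]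

lemma grid_count_lower (p : ℕ) (hp : 0 < p) {k : ℕ} (I : Fin k → ι → Set ℝ)
    (hord : ∀ a i, (I a i).OrdConnected)
    (hdisj : ∀ a b : Fin k, a ≠ b →
      Disjoint (interior (Set.univ.pi (I a))) (interior (Set.univ.pi (I b))))
    (R : Set (ι → ℝ))
    (hsub : (⋃ a, Set.univ.pi (I a)) ⊆ R) :
    (p:ℝ)^(Fintype.card ι) * (∑ a, ∏ i, (volume (interior (I a i) ∩ Ico 0 1)).toReal)
        - k * ((Fintype.card ι) * (p:ℝ)^(Fintype.card ι - 1))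
      ≤ ((Set.range (gridmap ι p) ∩ R).ncard : ℝ) := by
  classical
  have hgridfin : (Set.range (gridmap ι p)).Finite := Set.finite_range _
  set S : Fin k → Set (ι → ℝ) :=
    fun a => Set.range (gridmap ι p) ∩ Set.univ.pi fun i => interior (I a i) with hS
  have hSfin : ∀ a, (S a).Finite := fun a => hgridfin.subset Set.inter_subset_left
  have hpi_int : ∀ a, Set.univ.pi (fun i => interior (I a i)) = interior (Set.univ.pi (I a)) := by
    intro a
    rw [interior_pi_set Set.finite_univ]
  have hSdisj : ∀ a b : Fin k, a ≠ b → Disjoint (S a) (S b) := by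
    intro a b hab
    refine ((hdisj a b hab).mono ?_ ?_)
    · rw [hS, ← hpi_int a]
      exact Set.inter_subset_right
    · rw [hS, ← hpi_int b]
      exact Set.inter_subset_right
  have hsub2 : (⋃ a ∈ Finset.univ, S a) ⊆ Set.range (gridmap ι p) ∩ R := by
    intro x hx
    simp only [Finset.mem_univ, Set.iUnion_true, Set.mem_iUnion] at hx
    obtain ⟨a, hxa⟩ := hx
    refine ⟨hxa.1, hsub ?_⟩
    apply Set.mem_iUnion.mpr ⟨a, ?_⟩
    have : x ∈ interior (Set.univ.pi (I a)) := by
      rw [← hpi_int a]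
      exact hxa.2
    exact interior_subset this
  have h1 : ∑ a, (S a).ncard ≤ (Set.range (gridmap ι p) ∩ R).ncard := by
    rw [← ncard_biUnion_eq Finset.univ S hSfin
      (fun a b hab => hSdisj a b hab)]
    apply Set.ncard_le_ncard hsub2 (hgridfin.subset Set.inter_subset_left)
  have h2 : ∀ a, (p:ℝ)^(Fintype.card ι) * ∏ i, (volume (interior (I a i) ∩ Ico 0 1)).toReal
      - (Fintype.card ι) * (p:ℝ)^(Fintype.card ι - 1) ≤ ((S a).ncard : ℝ) := by
    intro a
    have := abs_le.mp (rect_count p hp (fun i => interior (I a i))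
      (fun i => (hord a i).interior))
    linarith [this.1]
  calc (p:ℝ)^(Fintype.card ι) * (∑ a, ∏ i, (volume (interior (I a i) ∩ Ico 0 1)).toReal)
        - k * ((Fintype.card ι) * (p:ℝ)^(Fintype.card ι - 1))
      = ∑ a, ((p:ℝ)^(Fintype.card ι) * ∏ i, (volume (interior (I a i) ∩ Ico 0 1)).toReal
        - (Fintype.card ι) * (p:ℝ)^(Fintype.card ι - 1)) := by
        rw [Finset.sum_sub_distrib, Finset.mul_sum, Finset.sum_const, Finset.card_univ,
          Fintype.card_fin, nsmul_eq_mul]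
    _ ≤ ∑ a, ((S a).ncard : ℝ) := Finset.sum_le_sum fun a _ => h2 a
    _ ≤ ((Set.range (gridmap ι p) ∩ R).ncard : ℝ) := by exact_mod_cast h1

end GridBounds

end Helpers

open Set in
set_option maxHeartbeats 1000000 in
theorem uniform_distribution_of_GLn
    (n : ℕ) (hn : 1 ≤ n)
    (R : Set (Fin n × Fin n → ℝ)) (hmeas : MeasurableSet R)
    (hsub : R ⊆ Set.univ.pi fun _ => Set.Icc (0 : ℝ) 1)
    (happrox : ∀ ε : ℝ, 0 < ε →
      ∃ (k l : ℕ) (Rin : Fin k → Set (Fin n × Fin n → ℝ))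
        (Rout : Fin l → Set (Fin n × Fin n → ℝ)),
        (∀ i, IsRect (Rin i)) ∧
        (∀ i j, i ≠ j → Disjoint (interior (Rin i)) (interior (Rin j))) ∧
        (∀ j, IsRect (Rout j)) ∧
        (∀ i j, i ≠ j → Disjoint (interior (Rout i)) (interior (Rout j))) ∧
        (⋃ i, Rin i) ⊆ R ∧ R ⊆ (⋃ j, Rout j) ∧
        volume (R \ ⋃ i, Rin i) < ENNReal.ofReal ε ∧
        volume ((⋃ j, Rout j) \ R) < ENNReal.ofReal ε) :
    Tendsto
      (fun p : ℕ =>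
        ((Set.range (hmap n p) ∩ R).ncard : ℝ) /
          (Nat.card (Matrix.GeneralLinearGroup (Fin n) (ZMod p)) : ℝ))
      (atTop ⊓ Filter.principal {p : ℕ | p.Prime}) (𝓝 (volume R).toReal) := by
  have hN : Fintype.card (Fin n × Fin n) = n * n := by simp
  have hnn1 : 1 ≤ n * n := Nat.one_le_iff_ne_zero.mpr (by positivity)
  have hVle : volume R ≤ 1 := by
    calc volume R ≤ volume (Set.univ.pi fun _ : Fin n × Fin n => Icc (0:ℝ) 1) :=
          measure_mono hsub
      _ = 1 := by rw [volume_pi_pi]; simp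
  have hvolRne : volume R ≠ ⊤ := ne_top_of_le_ne_top (by norm_num) hVle
  set V := (volume R).toReal with hVdef
  have hV0 : 0 ≤ V := ENNReal.toReal_nonneg
  have hV1 : V ≤ 1 := by
    have := ENNReal.toReal_mono (by norm_num) hVle
    simpa using this
  rw [Metric.tendsto_nhds]
  intro ε hε
  obtain ⟨k, l, Rin, Rout, hRinRect, hRinDisj, hRoutRect, hRoutDisj, hRinSub, hRoutSub,
    hvolin, hvolout⟩ := happrox (ε/8) (by linarith)
  have hRinRect' : ∀ i, ∃ I : (Fin n × Fin n) → Set ℝ,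
      (∀ q, (I q).OrdConnected) ∧ Rin i = Set.univ.pi I := hRinRect
  have hRoutRect' : ∀ j, ∃ I : (Fin n × Fin n) → Set ℝ,
      (∀ q, (I q).OrdConnected) ∧ Rout j = Set.univ.pi I := hRoutRect
  choose Iin hIinOrd hIinEq using hRinRect'
  choose Iout hIoutOrd hIoutEq using hRoutRect'
  have hUin : (⋃ i, Rin i) = ⋃ i, Set.univ.pi (Iin i) := by simp_rw [hIinEq]
  have hUout : (⋃ j, Rout j) = ⋃ j, Set.univ.pi (Iout j) := by simp_rw [hIoutEq]
  -- eventual arithmetic conditions on p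
  have hmul : Tendsto (fun p : ℕ => ε/8 * (p:ℝ)) atTop atTop :=
    Tendsto.const_mul_atTop (by linarith) tendsto_natCast_atTop_atTop
  have hev : ∀ᶠ p : ℕ in atTop,
      ((n:ℝ) ≤ ε/8 * p ∧ (2*n : ℝ) ≤ (p:ℝ) ∧ ((k*(n*n) : ℕ):ℝ) ≤ ε/8 * p
        ∧ ((l*(n*n) : ℕ):ℝ) ≤ ε/8 * p ∧ 1 ≤ p) := by
    have h1 := hmul.eventually_ge_atTop (n:ℝ)
    have h2 := tendsto_natCast_atTop_atTop.eventually_ge_atTop ((2*n : ℕ):ℝ)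
    have h3 := hmul.eventually_ge_atTop ((k*(n*n) : ℕ):ℝ)
    have h4 := hmul.eventually_ge_atTop ((l*(n*n) : ℕ):ℝ)
    have h5 : ∀ᶠ p : ℕ in atTop, 1 ≤ p := Filter.eventually_ge_atTop 1
    filter_upwards [h1, h2, h3, h4, h5] with p hp1 hp2 hp3 hp4 hp5
    refine ⟨hp1, ?_, hp3, hp4, hp5⟩
    push_cast at hp2 ⊢
    linarith
  rw [Filter.eventually_inf_principal]
  filter_upwards [hev] with p hp hprime
  haveI : Fact p.Prime := ⟨hprime⟩
  have hp0 : 0 < p := hprime.pos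
  obtain ⟨hc1, hc2, hc3, hc4, _⟩ := hp
  have hpR : (0:ℝ) < p := by exact_mod_cast hp0
  set P : ℝ := (p:ℝ)^(n*n) with hPdef
  have hPpos : (0:ℝ) < P := by positivity
  have hppow : (p:ℝ)^(n*n - 1) * p = P := by
    rw [hPdef, ← pow_succ]
    congr 1
    omega
  have hEk : (k:ℝ) * ((n*n : ℕ) * (p:ℝ)^(n*n - 1)) ≤ ε/8 * P := by
    have : ((k*(n*n) : ℕ):ℝ) * (p:ℝ)^(n*n-1) ≤ (ε/8 * p) * (p:ℝ)^(n*n-1) := by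
      apply mul_le_mul_of_nonneg_right hc3 (by positivity)
    push_cast at this ⊢
    nlinarith [this, hppow]
  have hEl : (l:ℝ) * ((n*n : ℕ) * (p:ℝ)^(n*n - 1)) ≤ ε/8 * P := by
    have : ((l*(n*n) : ℕ):ℝ) * (p:ℝ)^(n*n-1) ≤ (ε/8 * p) * (p:ℝ)^(n*n-1) := by
      apply mul_le_mul_of_nonneg_right hc4 (by positivity)
    push_cast at this ⊢
    nlinarith [this, hppow]
  -- GL cardinality bounds
  set G : ℝ := (Nat.card (Matrix.GeneralLinearGroup (Fin n) (ZMod p)) : ℝ) with hGdef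
  have hGle : G ≤ P := GL_card_le n p
  have hGge : ((1:ℝ) - n / p) * P ≤ G := GL_card_ge n p
  have hnp2 : (n:ℝ)/p ≤ 1/2 := by
    rw [div_le_iff₀ hpR]
    linarith
  have hnpe : (n:ℝ)/p ≤ ε/8 := by
    rw [div_le_iff₀ hpR]
    linarith [hc1]
  have hexp : (1 - (n:ℝ)/p) * P = P - ((n:ℝ)/p)*P := by ring
  have hG2 : P/2 ≤ G := by
    have t1 : ((n:ℝ)/p)*P ≤ (1/2)*P := mul_le_mul_of_nonneg_right hnp2 (le_of_lt hPpos)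
    linarith
  have hGpos : (0:ℝ) < G := by linarith
  have hPG : P - G ≤ ε/8 * P := by
    have t1 : ((n:ℝ)/p)*P ≤ (ε/8)*P := mul_le_mul_of_nonneg_right hnpe (le_of_lt hPpos)
    linarith
  -- counting
  set grid : Set ((Fin n × Fin n) → ℝ) := Set.range (gridmap (Fin n × Fin n) p) with hgrid
  have hgridfin : grid.Finite := Set.finite_range _
  set u : ℝ := ((Set.range (hmap n p) ∩ R).ncard : ℝ) with hu
  set Ng : ℝ := ((grid ∩ R).ncard : ℝ) with hNg
  have hu_le : u ≤ Ng := by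
    rw [hu, hNg]
    have : (Set.range (hmap n p) ∩ R).ncard ≤ (grid ∩ R).ncard :=
      Set.ncard_le_ncard (Set.inter_subset_inter_left R (hmap_range_subset n p))
        (hgridfin.subset Set.inter_subset_left)
    exact_mod_cast this
  have hNg_le : Ng ≤ u + (P - G) := by
    have hsplit : grid ∩ R ⊆ (Set.range (hmap n p) ∩ R) ∪ (grid \ Set.range (hmap n p)) := by
      intro x hx
      by_cases hxh : x ∈ Set.range (hmap n p)
      · exact Or.inl ⟨hxh, hx.2⟩
      · exact Or.inr ⟨hx.1, hxh⟩
    have h1 : (grid ∩ R).ncard ≤ (Set.range (hmap n p) ∩ R).ncard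
        + (grid \ Set.range (hmap n p)).ncard := by
      calc (grid ∩ R).ncard ≤ ((Set.range (hmap n p) ∩ R) ∪ (grid \ Set.range (hmap n p))).ncard :=
            Set.ncard_le_ncard hsplit
              (Set.Finite.union
                (hgridfin.subset ((Set.inter_subset_inter_left R
                  (hmap_range_subset n p)).trans Set.inter_subset_left))
                (hgridfin.subset Set.diff_subset))
        _ ≤ _ := Set.ncard_union_le _ _
    have h2 : ((grid \ Set.range (hmap n p)).ncard : ℝ) = P - G := by
      rw [Set.cast_ncard_sdiff (hmap_range_subset n p) hgridfin, hmap_range_ncard n p,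
        grid_ncard n p, hPdef, hGdef]
      push_cast
      ring
    have h1' : Ng ≤ u + ((grid \ Set.range (hmap n p)).ncard : ℝ) := by
      rw [hNg, hu]
      exact_mod_cast h1
    rw [h2] at h1'
    exact h1'
  -- upper bound on Ng
  have hNg_up : Ng ≤ P * (V + ε/8) + ε/8 * P := by
    have hsubout : R ⊆ ⋃ j, Set.univ.pi (Iout j) := hUout ▸ hRoutSub
    have hgcu := grid_count_upper p hp0 Iout hIoutOrd R hsubout
    rw [hN] at hgcu
    have hW : ∑ j, ∏ i, (volume (Iout j i ∩ Ico 0 1)).toReal ≤ V + ε/8 := by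
      have hdisj' : ∀ a b : Fin l, a ≠ b →
          Disjoint (interior (Set.univ.pi (Iout a))) (interior (Set.univ.pi (Iout b))) := by
        intro a b hab
        rw [← hIoutEq a, ← hIoutEq b]
        exact hRoutDisj a b hab
      have hvolout' : volume ((⋃ j, Set.univ.pi (Iout j)) \ R) ≤ ENNReal.ofReal (ε/8) := by
        rw [← hUout]
        exact le_of_lt hvolout
      exact sum_vol_out Iout hIoutOrd hdisj' R (by linarith) hsubout hvolRne hvolout'
    have hnn0 : (0:ℝ) ≤ ((n*n : ℕ):ℝ) * (p:ℝ)^(n*n-1) := by positivity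
    calc Ng ≤ (p:ℝ)^(n*n) * (∑ j, ∏ i, (volume (Iout j i ∩ Ico 0 1)).toReal)
          + l * (((n*n : ℕ):ℝ) * (p:ℝ)^(n*n - 1)) := by
          rw [hNg]
          exact_mod_cast hgcu
      _ ≤ P * (V + ε/8) + ε/8 * P := by
          have h1 : (p:ℝ)^(n*n) * (∑ j, ∏ i, (volume (Iout j i ∩ Ico 0 1)).toReal) ≤ P * (V + ε/8) := by
            rw [hPdef]
            apply mul_le_mul_of_nonneg_left hW (by positivity)
          have h2 : (l:ℝ) * (((n*n : ℕ):ℝ) * (p:ℝ)^(n*n - 1)) ≤ ε/8 * P := hEl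
          linarith
  -- lower bound on Ng
  have hNg_lo : P * (V - ε/8) - ε/8 * P ≤ Ng := by
    have hsubin : (⋃ a, Set.univ.pi (Iin a)) ⊆ R := hUin ▸ hRinSub
    have hdisj' : ∀ a b : Fin k, a ≠ b →
        Disjoint (interior (Set.univ.pi (Iin a))) (interior (Set.univ.pi (Iin b))) := by
      intro a b hab
      rw [← hIinEq a, ← hIinEq b]
      exact hRinDisj a b hab
    have hgcl := grid_count_lower p hp0 Iin hIinOrd hdisj' R hsubin
    rw [hN] at hgcl
    have hW : V - ε/8 ≤ ∑ a, ∏ i, (volume (interior (Iin a i) ∩ Ico 0 1)).toReal := by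
      have hvolin' : volume (R \ ⋃ a, Set.univ.pi (Iin a)) ≤ ENNReal.ofReal (ε/8) := by
        rw [← hUin]
        exact le_of_lt hvolin
      exact sum_vol_in Iin hIinOrd hdisj' R (by linarith) hsub hsubin hvolin'
    calc P * (V - ε/8) - ε/8 * P
        ≤ (p:ℝ)^(n*n) * (∑ a, ∏ i, (volume (interior (Iin a i) ∩ Ico 0 1)).toReal)
          - k * (((n*n : ℕ):ℝ) * (p:ℝ)^(n*n - 1)) := by
          have h1 : P * (V - ε/8) ≤ (p:ℝ)^(n*n) * (∑ a, ∏ i, (volume (interior (Iin a i) ∩ Ico 0 1)).toReal) := by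
            rw [hPdef]
            apply mul_le_mul_of_nonneg_left hW (by positivity)
          linarith [hEk]
      _ ≤ Ng := by
          rw [hNg]
          exact_mod_cast hgcl
  -- final computation
  rw [Real.dist_eq]
  have hPGnn : (0:ℝ) ≤ P - G := by linarith
  have m1 : V * (P - G) ≤ ε/8 * P := by
    calc V * (P - G) ≤ 1 * (P - G) := mul_le_mul_of_nonneg_right hV1 hPGnn
      _ = P - G := one_mul _
      _ ≤ ε/8 * P := hPG
  have m1' : 0 ≤ V * (P - G) := mul_nonneg hV0 hPGnn
  have m2 : (3*ε/8) * P ≤ (3*ε/4) * G := by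
    calc (3*ε/8)*P ≤ (3*ε/8)*(2*G) := by
          apply mul_le_mul_of_nonneg_left (by linarith) (by linarith)
      _ = (3*ε/4)*G := by ring
  have e1 : P*(V+ε/8) + ε/8*P = V*G + V*(P-G) + (ε/4)*P + 0 := by ring
  have e2 : (V + 3*ε/4)*G = V*G + (3*ε/4)*G := by ring
  have e3 : P*(V-ε/8) - ε/8*P = V*G + V*(P-G) - (ε/4)*P := by ring
  have e4 : (V - 3*ε/4)*G = V*G - (3*ε/4)*G := by ring
  have hbound1 : u ≤ (V + 3*ε/4) * G := by
    have hεP : 0 ≤ ε/8 * P := by positivity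
    nlinarith [hu_le, hNg_up, m1, m2]
  have hbound2 : (V - 3*ε/4) * G ≤ u := by
    nlinarith [hNg_le, hNg_lo, m1', m2, hPG]
  have hdiv1 : u / G ≤ V + 3*ε/4 := by
    rw [div_le_iff₀ hGpos]
    exact hbound1
  have hdiv2 : V - 3*ε/4 ≤ u / G := by
    rw [le_div_iff₀ hGpos]
    exact hbound2
  rw [abs_lt]
  constructor <;> [linarith; linarith]
end

section
/- Fix n ≥ 3. There exists a constant C (depending only on n) such that for every prime power q, every finite field 𝔽_q with q elements, every nontrivial additive character Ψ of 𝔽_q, every matrix 𝓜 ∈ GL_n(𝔽_q), and all matrices U, V ∈ M_n(𝔽_q) with (U,V) ≠ (0,0), one has |K(GL_n(𝔽_q), U, V, 𝓜)| ≤ C · q^{n² − 1}, where K(GL_n(𝔽_q), U, V, 𝓜) = Σ_{X ∈ GL_n(𝔽_q)} Ψ(U·X + V·(𝓜X⁻¹)). -/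
open Finset Matrix

namespace MKproof

set_option linter.unusedSectionVars false
variable {n : ℕ} {F : Type} [Field F] [Fintype F] [DecidableEq F]

/-- entrywise dot product -/
def dotp (A X : Matrix (Fin n) (Fin n) F) : F := ∑ i, ∑ j, A i j * X i j

lemma dotp_add (A X Y : Matrix (Fin n) (Fin n) F) :
    dotp A (X + Y) = dotp A X + dotp A Y := by
  simp [dotp, Matrix.add_apply, mul_add, Finset.sum_add_distrib]

lemma dotp_smul (A : Matrix (Fin n) (Fin n) F) (s : F) (X : Matrix (Fin n) (Fin n) F) :
    dotp A (s • X) = s * dotp A X := by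
  simp only [dotp, Matrix.smul_apply, smul_eq_mul, Finset.mul_sum]
  exact Finset.sum_congr rfl fun i _ => Finset.sum_congr rfl fun j _ => by ring

lemma dotp_zero_left (X : Matrix (Fin n) (Fin n) F) : dotp (0 : Matrix (Fin n) (Fin n) F) X = 0 := by
  simp [dotp]

lemma entry_sandwich (P Q : Matrix (Fin n) (Fin n) F) (k i a b : Fin n) :
    (P * Matrix.single k i (1:F) * Q) a b = P a k * Q i b := by
  rw [Matrix.mul_apply, Finset.sum_eq_single i]
  · rw [Matrix.mul_single_apply_same, mul_one]
  · intro d _ hd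
    simp [hd]
  · simp

lemma dotp_sandwich (V P Q : Matrix (Fin n) (Fin n) F) (k i : Fin n) :
    dotp V (P * Matrix.single k i (1:F) * Q) = ∑ b, (Pᵀ * V) k b * Q i b := by
  unfold dotp
  simp only [entry_sandwich]
  rw [Finset.sum_comm]
  refine Finset.sum_congr rfl fun b _ => ?_
  rw [Matrix.mul_apply, Finset.sum_mul]
  exact Finset.sum_congr rfl fun a _ => by rw [Matrix.transpose_apply]; ring


lemma dotp_std_basis (A : Matrix (Fin n) (Fin n) F) (p r : Fin n) :
    dotp A (Matrix.single p r (1:F)) = A p r := by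
  have h1 : Matrix.single p r (1:F) = 1 * Matrix.single p r (1:F) * 1 := by simp
  rw [h1, dotp_sandwich]
  simp [Matrix.one_apply, mul_ite, Finset.sum_ite_eq]

lemma card_matrix : Fintype.card (Matrix (Fin n) (Fin n) F) = Fintype.card F ^ (n * n) := by
  rw [Module.card_eq_pow_finrank (K := F), Module.finrank_matrix]
  simp

lemma card_dotp_zero_le {A : Matrix (Fin n) (Fin n) F} (hA : A ≠ 0) :
    (Finset.univ.filter fun X : Matrix (Fin n) (Fin n) F => dotp A X = 0).card
      ≤ Fintype.card F ^ (n * n - 1) := by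
  obtain ⟨p, r, hpr⟩ : ∃ p r, A p r ≠ 0 := by
    by_contra h
    push_neg at h
    exact hA (by ext p r; simp [h])
  let φ : Matrix (Fin n) (Fin n) F →ₗ[F] F :=
    { toFun := dotp A
      map_add' := fun X Y => dotp_add A X Y
      map_smul' := fun s X => dotp_smul A s X }
  have hφ : φ ≠ 0 := by
    intro h
    apply hpr
    have : φ (Matrix.single p r (1:F)) = 0 := by rw [h]; rfl
    rwa [show φ (Matrix.single p r (1:F)) = A p r from dotp_std_basis A p r] at this
  haveI : Fintype (LinearMap.ker φ) := Fintype.ofFinite _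
  have hker : Module.finrank F (LinearMap.ker φ) + 1 = n * n := by
    rw [Module.Dual.finrank_ker_add_one_of_ne_zero hφ, Module.finrank_matrix]
    simp
  have hcard : Fintype.card (LinearMap.ker φ) = Fintype.card F ^ (n * n - 1) := by
    rw [Module.card_eq_pow_finrank (K := F)]
    congr 1
    omega
  have : (Finset.univ.filter fun X : Matrix (Fin n) (Fin n) F => dotp A X = 0).card
      = Fintype.card (LinearMap.ker φ) := by
    rw [← Fintype.card_subtype]
    have e : {X : Matrix (Fin n) (Fin n) F // dotp A X = 0} ≃ LinearMap.ker φ :=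
      Equiv.subtypeEquivRight fun X => Iff.symm LinearMap.mem_ker
    exact Fintype.card_congr e
  rw [this, hcard]

lemma shear_mul {k i : Fin n} (h : i ≠ k) (s t : F) :
    (1 + s • Matrix.single k i (1:F)) * (1 + t • Matrix.single k i (1:F))
      = 1 + (s + t) • Matrix.single k i (1:F) := by
  have hE : Matrix.single k i (1:F) * Matrix.single k i (1:F) = 0 :=
    Matrix.single_mul_single_of_ne (1:F) k i k h (1:F)
  rw [add_mul, one_mul, mul_add, mul_one, Matrix.smul_mul, Matrix.mul_smul, hE,
    smul_zero, smul_zero, add_zero, add_smul]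
  abel

/-- shear unit `1 + s E_{ki}` in `GL_n`. -/
def shear (k i : Fin n) (h : i ≠ k) (s : F) : (Matrix (Fin n) (Fin n) F)ˣ where
  val := 1 + s • Matrix.single k i (1:F)
  inv := 1 + (-s) • Matrix.single k i (1:F)
  val_inv := by rw [shear_mul h, add_neg_cancel, zero_smul, add_zero]
  inv_val := by rw [shear_mul h, neg_add_cancel, zero_smul, add_zero]

@[simp] lemma shear_val (k i : Fin n) (h : i ≠ k) (s : F) :
    ((shear k i h s : (Matrix (Fin n) (Fin n) F)ˣ) : Matrix (Fin n) (Fin n) F)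
      = 1 + s • Matrix.single k i (1:F) := rfl

@[simp] lemma shear_inv_val (k i : Fin n) (h : i ≠ k) (s : F) :
    (((shear k i h s : (Matrix (Fin n) (Fin n) F)ˣ)⁻¹ : (Matrix (Fin n) (Fin n) F)ˣ)
        : Matrix (Fin n) (Fin n) F)
      = 1 + (-s) • Matrix.single k i (1:F) := rfl


variable {G : Type} 

lemma f_shift (M X : (Matrix (Fin n) (Fin n) F)ˣ) (U V : Matrix (Fin n) (Fin n) F)
    {k i : Fin n} (h : i ≠ k) (s : F) :
    dotp U ↑(X * shear k i h s) + dotp V ↑(M * (X * shear k i h s)⁻¹)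
      = (dotp U ↑X + dotp V ↑(M * X⁻¹))
        + s * (dotp U ((X : Matrix (Fin n) (Fin n) F) * Matrix.single k i 1)
            - dotp V ((M : Matrix (Fin n) (Fin n) F) * Matrix.single k i 1
                * ((X⁻¹ : _ˣ) : Matrix (Fin n) (Fin n) F))) := by
  have h1 : ((X * shear k i h s : (Matrix (Fin n) (Fin n) F)ˣ) : Matrix (Fin n) (Fin n) F)
      = (X : Matrix (Fin n) (Fin n) F) + s • ((X : Matrix (Fin n) (Fin n) F) * Matrix.single k i 1) := by
    rw [Units.val_mul, shear_val, mul_add, mul_one, Matrix.mul_smul]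
  have h2 : ((M * (X * shear k i h s)⁻¹ : (Matrix (Fin n) (Fin n) F)ˣ) : Matrix (Fin n) (Fin n) F)
      = ((M * X⁻¹ : (Matrix (Fin n) (Fin n) F)ˣ) : Matrix (Fin n) (Fin n) F) + (-s) • ((M : Matrix (Fin n) (Fin n) F) * Matrix.single k i 1
          * ((X⁻¹ : _ˣ) : Matrix (Fin n) (Fin n) F)) := by
    rw [_root_.mul_inv_rev, Units.val_mul, Units.val_mul, shear_inv_val, add_mul, one_mul,
      Matrix.smul_mul, mul_add, Matrix.mul_smul, Units.val_mul, Matrix.mul_assoc]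
  rw [h1, h2, dotp_add, dotp_smul, dotp_add, dotp_smul]
  ring

lemma g_shift (M X : (Matrix (Fin n) (Fin n) F)ˣ) (U V : Matrix (Fin n) (Fin n) F)
    {k i m : Fin n} (h' : k ≠ m) (him : i ≠ m) (s : F) :
    dotp U (((X * shear m k h' s : (Matrix (Fin n) (Fin n) F)ˣ) : Matrix (Fin n) (Fin n) F)
        * Matrix.single k i 1)
      - dotp V ((M : Matrix (Fin n) (Fin n) F) * Matrix.single k i 1
          * (((X * shear m k h' s)⁻¹ : (Matrix (Fin n) (Fin n) F)ˣ) : Matrix (Fin n) (Fin n) F))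
      = (dotp U ((X : Matrix (Fin n) (Fin n) F) * Matrix.single k i 1)
          - dotp V ((M : Matrix (Fin n) (Fin n) F) * Matrix.single k i 1
              * ((X⁻¹ : _ˣ) : Matrix (Fin n) (Fin n) F)))
        + s * dotp U ((X : Matrix (Fin n) (Fin n) F) * Matrix.single m i 1) := by
  have hEE : Matrix.single m k (1:F) * Matrix.single k i (1:F) = Matrix.single m i (1:F) := by
    rw [Matrix.single_mul_single_same, one_mul]
  have hz : ∀ Q : Matrix (Fin n) (Fin n) F,
      Matrix.single k i (1:F) * (Matrix.single m k (1:F) * Q) = 0 := by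
    intro Q
    rw [← Matrix.mul_assoc, Matrix.single_mul_single_of_ne (1:F) k i m him (1:F), Matrix.zero_mul]
  have h1 : ((X * shear m k h' s : (Matrix (Fin n) (Fin n) F)ˣ) : Matrix (Fin n) (Fin n) F)
        * Matrix.single k i 1
      = (X : Matrix (Fin n) (Fin n) F) * Matrix.single k i 1
        + s • ((X : Matrix (Fin n) (Fin n) F) * Matrix.single m i 1) := by
    rw [Units.val_mul, shear_val, mul_add, mul_one, add_mul, Matrix.mul_smul,
      Matrix.smul_mul, Matrix.mul_assoc, hEE]
  have h2 : (M : Matrix (Fin n) (Fin n) F) * Matrix.single k i 1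
        * (((X * shear m k h' s)⁻¹ : (Matrix (Fin n) (Fin n) F)ˣ) : Matrix (Fin n) (Fin n) F)
      = (M : Matrix (Fin n) (Fin n) F) * Matrix.single k i 1
        * ((X⁻¹ : _ˣ) : Matrix (Fin n) (Fin n) F) := by
    rw [_root_.mul_inv_rev, Units.val_mul, shear_inv_val, add_mul, one_mul, Matrix.smul_mul,
      mul_add, Matrix.mul_smul]
    simp only [Matrix.mul_assoc]
    rw [hz, Matrix.mul_zero, smul_zero, add_zero]
  rw [h1, h2, dotp_add, dotp_smul]
  ring


lemma step1 (Ψ : AddChar F ℂ) (hΨ : Ψ ≠ 1) (M : (Matrix (Fin n) (Fin n) F)ˣ)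
    (U V : Matrix (Fin n) (Fin n) F) (k i : Fin n) (h : i ≠ k) :
    ‖∑ X : (Matrix (Fin n) (Fin n) F)ˣ, Ψ (dotp U ↑X + dotp V ↑(M * X⁻¹))‖
      ≤ ((Finset.univ.filter fun X : (Matrix (Fin n) (Fin n) F)ˣ =>
          dotp U ((X : Matrix (Fin n) (Fin n) F) * Matrix.single k i 1)
            - dotp V ((M : Matrix (Fin n) (Fin n) F) * Matrix.single k i 1
                * ((X⁻¹ : _ˣ) : Matrix (Fin n) (Fin n) F)) = 0).card : ℝ) := by
  classical
  set g : (Matrix (Fin n) (Fin n) F)ˣ → F := fun X =>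
    dotp U ((X : Matrix (Fin n) (Fin n) F) * Matrix.single k i 1)
      - dotp V ((M : Matrix (Fin n) (Fin n) F) * Matrix.single k i 1
          * ((X⁻¹ : _ˣ) : Matrix (Fin n) (Fin n) F)) with hgdef
  set S : ℂ := ∑ X : (Matrix (Fin n) (Fin n) F)ˣ, Ψ (dotp U ↑X + dotp V ↑(M * X⁻¹)) with hSdef
  have hq0 : (0:ℝ) < (Fintype.card F : ℝ) := by
    exact_mod_cast Fintype.card_pos
  have hmul : (Fintype.card F : ℂ) * S
      = ∑ X : (Matrix (Fin n) (Fin n) F)ˣ, Ψ (dotp U ↑X + dotp V ↑(M * X⁻¹))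
          * (if g X = 0 then (Fintype.card F : ℂ) else 0) := by
    calc (Fintype.card F : ℂ) * S = ∑ _s : F, S := by
          rw [Finset.sum_const, Finset.card_univ, nsmul_eq_mul]
      _ = ∑ s : F, ∑ X : (Matrix (Fin n) (Fin n) F)ˣ,
            Ψ (dotp U ↑(X * shear k i h s) + dotp V ↑(M * (X * shear k i h s)⁻¹)) := by
          refine Finset.sum_congr rfl fun s _ => ?_
          exact (Equiv.sum_comp (Equiv.mulRight (shear k i h s))
            (fun X => Ψ (dotp U ↑X + dotp V ↑(M * X⁻¹)))).symm
      _ = ∑ s : F, ∑ X : (Matrix (Fin n) (Fin n) F)ˣ,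
            Ψ (dotp U ↑X + dotp V ↑(M * X⁻¹)) * Ψ (s * g X) := by
          refine Finset.sum_congr rfl fun s _ => Finset.sum_congr rfl fun X _ => ?_
          rw [f_shift M X U V h s, AddChar.map_add_eq_mul]
      _ = ∑ X : (Matrix (Fin n) (Fin n) F)ˣ,
            Ψ (dotp U ↑X + dotp V ↑(M * X⁻¹)) * ∑ s : F, Ψ (s * g X) := by
          rw [Finset.sum_comm]
          exact Finset.sum_congr rfl fun X _ => (Finset.mul_sum _ _ _).symm
      _ = _ := by
          refine Finset.sum_congr rfl fun X _ => ?_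
          rw [AddChar.sum_mulShift (g X) (AddChar.IsPrimitive.of_ne_one hΨ)]
          push_cast
          rfl
  have hnorm : (Fintype.card F : ℝ) * ‖S‖
      ≤ (Fintype.card F : ℝ) * ((Finset.univ.filter fun X => g X = 0).card : ℝ) := by
    have h1 : ‖(Fintype.card F : ℂ) * S‖
        ≤ ∑ X : (Matrix (Fin n) (Fin n) F)ˣ,
            ‖Ψ (dotp U ↑X + dotp V ↑(M * X⁻¹)) * (if g X = 0 then (Fintype.card F : ℂ) else 0)‖ := by
      rw [hmul]; exact norm_sum_le _ _
    rw [norm_mul, Complex.norm_natCast] at h1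
    calc (Fintype.card F : ℝ) * ‖S‖ ≤ _ := h1
      _ = ∑ X : (Matrix (Fin n) (Fin n) F)ˣ, (if g X = 0 then (Fintype.card F : ℝ) else 0) := by
          refine Finset.sum_congr rfl fun X _ => ?_
          rw [norm_mul, AddChar.norm_apply, one_mul]
          split_ifs
          · exact Complex.norm_natCast _
          · exact norm_zero
      _ = ∑ X ∈ Finset.univ.filter fun X => g X = 0, (Fintype.card F : ℝ) := by
          rw [Finset.sum_filter]
      _ = (Fintype.card F : ℝ) * ((Finset.univ.filter fun X => g X = 0).card : ℝ) := by
          rw [Finset.sum_const, nsmul_eq_mul, mul_comm]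
  exact le_of_mul_le_mul_left hnorm hq0


lemma dotp_col (UU Y : Matrix (Fin n) (Fin n) F) (m i : Fin n) :
    dotp UU (Y * Matrix.single m i 1) = ∑ a, UU a i * Y a m := by
  have h0 : Y * Matrix.single m i (1:F) = Y * Matrix.single m i 1 * 1 := by
    rw [Matrix.mul_one]
  rw [h0, dotp_sandwich, Finset.sum_eq_single i]
  · rw [Matrix.one_apply_eq, mul_one, Matrix.mul_apply]
    exact Finset.sum_congr rfl fun a _ => by rw [Matrix.transpose_apply]; ring
  · intro b _ hb
    rw [Matrix.one_apply_ne' hb, mul_zero]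
  · simp

lemma exists_two_ne (hn : 3 ≤ n) (i : Fin n) : ∃ k m : Fin n, i ≠ k ∧ i ≠ m ∧ k ≠ m := by
  have h2 : ∀ st : Finset (Fin n), st.card ≤ 2 → ∃ x, x ∉ st := by
    intro st hst
    by_contra hx
    push_neg at hx
    have hsub : (Finset.univ : Finset (Fin n)) ⊆ st := fun x _ => hx x
    have := Finset.card_le_card hsub
    rw [Finset.card_univ, Fintype.card_fin] at this
    omega
  obtain ⟨k, hk⟩ := h2 {i} (by simp)
  obtain ⟨m, hm⟩ := h2 {i, k} ((Finset.card_insert_le _ _).trans (by simp))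
  simp only [Finset.mem_singleton, Finset.mem_insert, not_or] at hk hm
  exact ⟨k, m, fun h => hk h.symm, fun h => hm.1 h.symm, fun h => hm.2 h.symm⟩

lemma countA (M : (Matrix (Fin n) (Fin n) F)ˣ) (U V : Matrix (Fin n) (Fin n) F)
    {i k m : Fin n} (him : i ≠ m) (hkm : k ≠ m) {a0 : Fin n} (ha : U a0 i ≠ 0) :
    (Finset.univ.filter fun X : (Matrix (Fin n) (Fin n) F)ˣ =>
        dotp U ((X : Matrix (Fin n) (Fin n) F) * Matrix.single k i 1)
          - dotp V ((M : Matrix (Fin n) (Fin n) F) * Matrix.single k i 1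
              * ((X⁻¹ : _ˣ) : Matrix (Fin n) (Fin n) F)) = 0).card
      ≤ 2 * Fintype.card F ^ (n * n - 1) := by
  classical
  set g : (Matrix (Fin n) (Fin n) F)ˣ → F := fun X =>
    dotp U ((X : Matrix (Fin n) (Fin n) F) * Matrix.single k i 1)
      - dotp V ((M : Matrix (Fin n) (Fin n) F) * Matrix.single k i 1
          * ((X⁻¹ : _ˣ) : Matrix (Fin n) (Fin n) F)) with hgdef
  set d : (Matrix (Fin n) (Fin n) F)ˣ → F := fun X =>
    dotp U ((X : Matrix (Fin n) (Fin n) F) * Matrix.single m i 1) with hddef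
  set N := (Finset.univ.filter fun X => g X = 0).card with hNdef
  have count1 : ∀ s : F,
      (Finset.univ.filter fun X : (Matrix (Fin n) (Fin n) F)ˣ => g X + s * d X = 0).card = N := by
    intro s
    have hpred : ∀ X : (Matrix (Fin n) (Fin n) F)ˣ,
        g (X * shear m k hkm s) = g X + s * d X := fun X => g_shift M X U V hkm him s
    have heq : (Finset.univ.filter fun X : (Matrix (Fin n) (Fin n) F)ˣ => g X + s * d X = 0)
        = (Finset.univ.filter fun X => g (X * shear m k hkm s) = 0) := by
      refine Finset.filter_congr fun X _ => ?_
      rw [hpred X]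
    rw [heq, hNdef]
    refine Finset.card_bij' (fun X _ => X * shear m k hkm s)
      (fun Y _ => Y * (shear m k hkm s)⁻¹) ?_ ?_ ?_ ?_
    · intro X hX
      simp only [Finset.mem_filter, Finset.mem_univ, true_and] at hX ⊢
      exact hX
    · intro Y hY
      simp only [Finset.mem_filter, Finset.mem_univ, true_and] at hY ⊢
      rwa [inv_mul_cancel_right]
    · intro X _
      show X * shear m k hkm s * (shear m k hkm s)⁻¹ = X
      exact mul_inv_cancel_right _ _
    · intro Y _
      show Y * (shear m k hkm s)⁻¹ * shear m k hkm s = Y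
      exact inv_mul_cancel_right _ _
  have e1 : Fintype.card F * N
      = ∑ s : F, (Finset.univ.filter fun X : (Matrix (Fin n) (Fin n) F)ˣ =>
          g X + s * d X = 0).card := by
    rw [Finset.sum_congr rfl fun s _ => count1 s, Finset.sum_const, Finset.card_univ,
      smul_eq_mul]
  have e2 : ∑ s : F, (Finset.univ.filter fun X : (Matrix (Fin n) (Fin n) F)ˣ =>
        g X + s * d X = 0).card
      = ∑ X : (Matrix (Fin n) (Fin n) F)ˣ,
          (Finset.univ.filter fun s : F => g X + s * d X = 0).card := by
    simp only [Finset.card_filter]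
    exact Finset.sum_comm
  have e3 : ∀ X : (Matrix (Fin n) (Fin n) F)ˣ,
      (Finset.univ.filter fun s : F => g X + s * d X = 0).card
        ≤ (if d X = 0 then Fintype.card F else 0) + 1 := by
    intro X
    split_ifs with hd
    · exact ((Finset.card_filter_le _ _).trans (le_of_eq (Finset.card_univ))).trans
        (Nat.le_succ _)
    · rw [zero_add]
      refine Finset.card_le_one.mpr fun s hs t ht => ?_
      simp only [Finset.mem_filter, Finset.mem_univ, true_and] at hs ht
      have hst : s * d X = t * d X := by linear_combination hs - ht
      exact mul_right_cancel₀ hd hst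
  have count2 : Fintype.card F * N
      ≤ Fintype.card F * (Finset.univ.filter
            fun X : (Matrix (Fin n) (Fin n) F)ˣ => d X = 0).card
        + Fintype.card (Matrix (Fin n) (Fin n) F)ˣ := by
    rw [e1, e2]
    calc ∑ X : (Matrix (Fin n) (Fin n) F)ˣ,
          (Finset.univ.filter fun s : F => g X + s * d X = 0).card
        ≤ ∑ X : (Matrix (Fin n) (Fin n) F)ˣ,
            ((if d X = 0 then Fintype.card F else 0) + 1) :=
          Finset.sum_le_sum fun X _ => e3 X
      _ = _ := by
          rw [Finset.sum_add_distrib, Finset.sum_const, Finset.card_univ, smul_eq_mul, mul_one]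
          congr 1
          rw [← Finset.sum_filter, Finset.sum_const, smul_eq_mul, mul_comm]
  have hG : Fintype.card (Matrix (Fin n) (Fin n) F)ˣ ≤ Fintype.card F ^ (n * n) :=
    (Fintype.card_le_of_injective Units.val fun _ _ h => Units.ext h).trans_eq card_matrix
  have hdle : (Finset.univ.filter
        fun X : (Matrix (Fin n) (Fin n) F)ˣ => d X = 0).card
      ≤ Fintype.card F ^ (n * n - 1) := by
    set A : Matrix (Fin n) (Fin n) F := Matrix.of fun a b => if b = m then U a i else 0 with hA
    have hAne : A ≠ 0 := by
      intro h0
      apply ha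
      have := congrFun (congrFun h0 a0) m
      simpa [hA] using this
    have hdA : ∀ Y : Matrix (Fin n) (Fin n) F,
        dotp U (Y * Matrix.single m i 1) = dotp A Y := by
      intro Y
      rw [dotp_col]
      symm
      calc dotp A Y = ∑ a, ∑ b, (if b = m then U a i else 0) * Y a b := rfl
        _ = ∑ a, U a i * Y a m := by
            refine Finset.sum_congr rfl fun a _ => ?_
            rw [Finset.sum_eq_single m]
            · simp
            · intro b _ hb; simp [hb]
            · simp
    calc (Finset.univ.filter fun X : (Matrix (Fin n) (Fin n) F)ˣ => d X = 0).card
        = (Finset.univ.filter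
            fun X : (Matrix (Fin n) (Fin n) F)ˣ =>
              dotp A (X : Matrix (Fin n) (Fin n) F) = 0).card := by
          refine congrArg Finset.card (Finset.filter_congr fun X _ => ?_)
          rw [hgdef] at *
          rw [show d X = dotp A (X : Matrix (Fin n) (Fin n) F) from hdA _]
      _ ≤ (Finset.univ.filter
            fun Y : Matrix (Fin n) (Fin n) F => dotp A Y = 0).card := by
          refine Finset.card_le_card_of_injOn
            (fun X => (X : Matrix (Fin n) (Fin n) F)) ?_ ?_
          · intro X hX
            simp only [Finset.coe_filter, Set.mem_setOf_eq, Finset.mem_filter, Finset.mem_univ, true_and] at hX ⊢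
            exact hX
          · exact fun X _ Y _ hXY => Units.ext hXY
      _ ≤ _ := card_dotp_zero_le hAne
  have hnn : 1 ≤ n * n := Nat.one_le_iff_ne_zero.mpr (by
    intro h0
    have : n = 0 := by
      rcases Nat.mul_eq_zero.mp h0 with h | h <;> exact h
    exact absurd (this ▸ i.pos) (by simp [this]))
  have hqpow : Fintype.card F ^ (n * n) = Fintype.card F * Fintype.card F ^ (n * n - 1) := by
    have h' : n * n - 1 + 1 = n * n := Nat.sub_add_cancel hnn
    calc Fintype.card F ^ (n * n) = Fintype.card F ^ (n * n - 1 + 1) := by rw [h']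
      _ = _ := by rw [pow_succ, mul_comm]
  have hfin : Fintype.card F * N ≤ Fintype.card F * (2 * Fintype.card F ^ (n * n - 1)) := by
    calc Fintype.card F * N
        ≤ Fintype.card F * (Finset.univ.filter
              fun X : (Matrix (Fin n) (Fin n) F)ˣ => d X = 0).card
            + Fintype.card (Matrix (Fin n) (Fin n) F)ˣ := count2
      _ ≤ Fintype.card F * Fintype.card F ^ (n * n - 1)
            + Fintype.card F * Fintype.card F ^ (n * n - 1) := by
          refine Nat.add_le_add (Nat.mul_le_mul_left _ hdle) (hG.trans (le_of_eq hqpow))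
      _ = Fintype.card F * (2 * Fintype.card F ^ (n * n - 1)) := by ring
  exact Nat.le_of_mul_le_mul_left hfin Fintype.card_pos

lemma countB (M : (Matrix (Fin n) (Fin n) F)ˣ) (V : Matrix (Fin n) (Fin n) F)
    {i k : Fin n} {b0 : Fin n}
    (hW : ((M : Matrix (Fin n) (Fin n) F)ᵀ * V) k b0 ≠ 0) :
    (Finset.univ.filter fun X : (Matrix (Fin n) (Fin n) F)ˣ =>
        dotp (0 : Matrix (Fin n) (Fin n) F)
            ((X : Matrix (Fin n) (Fin n) F) * Matrix.single k i 1)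
          - dotp V ((M : Matrix (Fin n) (Fin n) F) * Matrix.single k i 1
              * ((X⁻¹ : _ˣ) : Matrix (Fin n) (Fin n) F)) = 0).card
      ≤ Fintype.card F ^ (n * n - 1) := by
  classical
  set W : Matrix (Fin n) (Fin n) F := (M : Matrix (Fin n) (Fin n) F)ᵀ * V with hWdef
  set B : Matrix (Fin n) (Fin n) F := Matrix.of fun a b => if a = i then W k b else 0 with hB
  have hBne : B ≠ 0 := by
    intro h0
    apply hW
    have := congrFun (congrFun h0 i) b0
    simpa [hB] using this
  have hVB : ∀ Y : Matrix (Fin n) (Fin n) F,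
      dotp V ((M : Matrix (Fin n) (Fin n) F) * Matrix.single k i 1 * Y) = dotp B Y := by
    intro Y
    rw [dotp_sandwich]
    symm
    calc dotp B Y = ∑ a, ∑ b, (if a = i then W k b else 0) * Y a b := rfl
      _ = ∑ b, W k b * Y i b := by
          rw [Finset.sum_eq_single i]
          · simp
          · intro a _ ha'
            exact Finset.sum_eq_zero fun b _ => by simp [ha']
          · simp
  calc (Finset.univ.filter fun X : (Matrix (Fin n) (Fin n) F)ˣ =>
        dotp (0 : Matrix (Fin n) (Fin n) F)
            ((X : Matrix (Fin n) (Fin n) F) * Matrix.single k i 1)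
          - dotp V ((M : Matrix (Fin n) (Fin n) F) * Matrix.single k i 1
              * ((X⁻¹ : _ˣ) : Matrix (Fin n) (Fin n) F)) = 0).card
      = (Finset.univ.filter fun X : (Matrix (Fin n) (Fin n) F)ˣ =>
          dotp B (((X⁻¹ : _ˣ) : Matrix (Fin n) (Fin n) F)) = 0).card := by
        refine congrArg Finset.card (Finset.filter_congr fun X _ => ?_)
        rw [dotp_zero_left, hVB, zero_sub, neg_eq_zero]
    _ ≤ (Finset.univ.filter
          fun Y : Matrix (Fin n) (Fin n) F => dotp B Y = 0).card := by
        refine Finset.card_le_card_of_injOn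
          (fun X => ((X⁻¹ : _ˣ) : Matrix (Fin n) (Fin n) F)) ?_ ?_
        · intro X hX
          simp only [Finset.coe_filter, Set.mem_setOf_eq, Finset.mem_filter, Finset.mem_univ, true_and] at hX ⊢
          exact hX
        · exact fun X _ Y _ hXY => inv_injective (Units.ext hXY)
    _ ≤ _ := card_dotp_zero_le hBne


lemma key (hn : 3 ≤ n) (Ψ : AddChar F ℂ) (hΨ : Ψ ≠ 1) (M : (Matrix (Fin n) (Fin n) F)ˣ)
    (U V : Matrix (Fin n) (Fin n) F) (hUV : ¬(U = 0 ∧ V = 0)) :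
    ‖∑ X : (Matrix (Fin n) (Fin n) F)ˣ, Ψ (dotp U ↑X + dotp V ↑(M * X⁻¹))‖
      ≤ 2 * (Fintype.card F : ℝ) ^ (n * n - 1) := by
  classical
  by_cases hU : U = 0
  · have hV : V ≠ 0 := fun h => hUV ⟨hU, h⟩
    have hWne : ((M : Matrix (Fin n) (Fin n) F)ᵀ * V) ≠ 0 := by
      intro h0
      apply hV
      have h1 : (((M⁻¹ : _ˣ) : Matrix (Fin n) (Fin n) F))ᵀ
          * (((M : _ˣ) : Matrix (Fin n) (Fin n) F)ᵀ * V) = V := by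
        rw [← Matrix.mul_assoc, ← Matrix.transpose_mul, ← Units.val_mul, mul_inv_cancel,
          Units.val_one, Matrix.transpose_one, Matrix.one_mul]
      rw [h0, Matrix.mul_zero] at h1
      exact h1.symm
    obtain ⟨k, b0, hkb⟩ : ∃ k b0, ((M : Matrix (Fin n) (Fin n) F)ᵀ * V) k b0 ≠ 0 := by
      by_contra h0
      push_neg at h0
      exact hWne (by ext a b; simp [h0])
    obtain ⟨i, _, hki, _, _⟩ := exists_two_ne hn k
    have hik : i ≠ k := fun h => hki h.symm
    subst hU
    refine (step1 Ψ hΨ M 0 V k i hik).trans ?_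
    have hc := countB (i := i) M V hkb
    have : ((Finset.univ.filter fun X : (Matrix (Fin n) (Fin n) F)ˣ =>
        dotp (0 : Matrix (Fin n) (Fin n) F)
            ((X : Matrix (Fin n) (Fin n) F) * Matrix.single k i 1)
          - dotp V ((M : Matrix (Fin n) (Fin n) F) * Matrix.single k i 1
              * ((X⁻¹ : _ˣ) : Matrix (Fin n) (Fin n) F)) = 0).card : ℝ)
        ≤ ((Fintype.card F ^ (n * n - 1) : ℕ) : ℝ) := by exact_mod_cast hc
    refine this.trans ?_
    push_cast
    nlinarith [pow_nonneg (show (0:ℝ) ≤ (Fintype.card F : ℝ) by positivity) (n * n - 1)]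
  · obtain ⟨a0, i, ha⟩ : ∃ a i, U a i ≠ 0 := by
      by_contra h0
      push_neg at h0
      exact hU (by ext a b; simp [h0])
    obtain ⟨k, m, hik, him, hkm⟩ := exists_two_ne hn i
    refine (step1 Ψ hΨ M U V k i hik).trans ?_
    have hc := countA M U V him hkm ha
    calc ((Finset.univ.filter fun X : (Matrix (Fin n) (Fin n) F)ˣ =>
        dotp U ((X : Matrix (Fin n) (Fin n) F) * Matrix.single k i 1)
          - dotp V ((M : Matrix (Fin n) (Fin n) F) * Matrix.single k i 1
              * ((X⁻¹ : _ˣ) : Matrix (Fin n) (Fin n) F)) = 0).card : ℝ)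
        ≤ ((2 * Fintype.card F ^ (n * n - 1) : ℕ) : ℝ) := by exact_mod_cast hc
      _ = 2 * (Fintype.card F : ℝ) ^ (n * n - 1) := by push_cast; ring

end MKproof


/-- For `n ≥ 3`, the matrix Kloosterman sum over `GL_n(𝔽_q)` satisfies the improved bound
`|K(GL_n(𝔽_q), U, V, 𝓜)| ≤ C · q^{n² - 1}`. -/
theorem matrix_kloosterman_improved_bound_GLn (n : ℕ) (hn : 3 ≤ n) :
    ∃ C : ℝ, ∀ (F : Type) [Field F] [Fintype F] [DecidableEq F] (Ψ : AddChar F ℂ),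
      Ψ ≠ 1 →
      ∀ (M : Matrix.GeneralLinearGroup (Fin n) F) (U V : Matrix (Fin n) (Fin n) F),
        ¬(U = 0 ∧ V = 0) →
        ‖∑ X : Matrix.GeneralLinearGroup (Fin n) F,
            Ψ ((∑ i, ∑ j, U i j * (X : Matrix (Fin n) (Fin n) F) i j) +
               (∑ i, ∑ j, V i j *
                 ((M * X⁻¹ : Matrix.GeneralLinearGroup (Fin n) F) :
                   Matrix (Fin n) (Fin n) F) i j))‖ ≤
          C * (Fintype.card F : ℝ) ^ ((n : ℝ) ^ 2 - 1) := by
  refine ⟨2, ?_⟩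
  intro F _ _ _ Ψ hΨ M U V hUV
  have h := MKproof.key (F := F) hn Ψ hΨ M U V hUV
  have hexp : (Fintype.card F : ℝ) ^ ((n : ℝ) ^ 2 - 1)
      = (Fintype.card F : ℝ) ^ (n * n - 1 : ℕ) := by
    rw [← Real.rpow_natCast (Fintype.card F : ℝ) (n * n - 1)]
    congr 1
    have h1 : 1 ≤ n * n := Nat.one_le_iff_ne_zero.mpr (by positivity)
    push_cast [Nat.cast_sub h1]
    ring
  rw [hexp]
  exact h
end
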